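/- arXiv:2503.15263 — 2 statements merged into one kernel-verified Lean document; each statement's English description precedes it below -/
import Mathlib

section
/- Let Φ = {Φ_V} be a translation-invariant uniformly absolutely convergent interaction on Ω = E^ℤ, and set φ = −Σ_{V ∋ 0, V ⊂ ℤ_{≥0} finite} Φ_V. Then there exists a sequence C_n > 0 with (1/n) log C_n → 0 such that every S-invariant Gibbs measure μ for Φ satisfies C_n^{-1} ≤ μ([ω_0^{n-1}]) / exp(S_nφ(ω) − nP(φ)) ≤ C_n for all n ∈ ℕ and ω ∈ Ω, where P(φ) is the topological pressure of φ. -/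
open Filter Topology MeasureTheory

namespace GP

/-- The configuration space `Ω = E^ℤ`. -/
abbrev Conf (E : Type*) := ℤ → E

variable {E : Type*}

/-- The shift by `i`: `(shiftZ i ω) k = ω (k + i)`.  The left shift `S` is `shiftZ 1`. -/
def shiftZ (i : ℤ) (ω : Conf E) : Conf E := fun k => ω (k + i)

/-- The cylinder set determined by a word `w ∈ E^n` (placed on coordinates `0,…,n-1`). -/
def cylW {n : ℕ} (w : Fin n → E) : Set (Conf E) := {ω | ∀ j : Fin n, ω ((j : ℕ) : ℤ) = w j}

/-- The cylinder set `[ω_0^{n-1}]`. -/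
def cylPt (ω : Conf E) (n : ℕ) : Set (Conf E) :=
  {ω' | ∀ j : ℕ, j < n → ω' (j : ℤ) = ω (j : ℤ)}

/-- Birkhoff sum `S_n φ = ∑_{k=0}^{n-1} φ ∘ S^k`. -/
def birk (φ : Conf E → ℝ) (n : ℕ) (ω : Conf E) : ℝ :=
  ∑ k ∈ Finset.range n, φ (shiftZ (k : ℤ) ω)

/-- Topological pressure of `φ` on the full shift:
`P(φ) = lim_n (1/n) log ∑_{w ∈ E^n} sup_{ω ∈ [w]} exp (S_n φ (ω))`
(the limit exists; we use `limsup` as the defining expression). -/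
noncomputable def press [Fintype E] (φ : Conf E → ℝ) : ℝ :=
  Filter.limsup (fun n : ℕ =>
    Real.log (∑ w : Fin n → E, sSup ((fun ω => Real.exp (birk φ n ω)) '' cylW w)) / n) atTop

/-- Kolmogorov–Sinai entropy of a shift-invariant measure on the full shift,
computed along the canonical generating partition into cylinders
(the limit exists; we use `limsup` as the defining expression). -/
noncomputable def ent [Fintype E] [MeasurableSpace E] (μ : Measure (Conf E)) : ℝ :=
  Filter.limsup (fun n : ℕ =>
    (- ∑ w : Fin n → E, ((μ (cylW w)).toReal * Real.log (μ (cylW w)).toReal)) / n) atTop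

/-- Shift invariance of a measure. -/
def ShiftInv [MeasurableSpace E] (μ : Measure (Conf E)) : Prop :=
  Measure.map (shiftZ 1) μ = μ

/-- `μ` is an equilibrium state for `φ`: `μ` is a shift-invariant Borel probability
measure with `h(μ) + ∫ φ dμ = P(φ)`. -/
def IsEquilibrium [Fintype E] [MeasurableSpace E] (φ : Conf E → ℝ)
    (μ : Measure (Conf E)) : Prop :=
  IsProbabilityMeasure μ ∧ ShiftInv μ ∧ ent μ + ∫ ω, φ ω ∂μ = press φ

/-- `ω^c`: the configuration equal to `c` at site `0` and to `ω` elsewhere. -/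
def upd0 (ω : Conf E) (c : E) : Conf E := Function.update ω 0 c

/-- Partial sums `ρ_n(ξ,η) = ∑_{i=-n}^{n} (φ(S^i ξ) - φ(S^i η))`. -/
noncomputable def rhoN (φ : Conf E → ℝ) (ξ η : Conf E) (n : ℕ) : ℝ :=
  ∑ i ∈ Finset.Icc (-(n : ℤ)) (n : ℤ), (φ (shiftZ i ξ) - φ (shiftZ i η))

/-- `φ` has the extensibility property: for all `a b ∈ E`, the functions
`ω ↦ ∑_{i=-n}^{n} (φ(S^i(ω^b)) - φ(S^i(ω^a)))` converge uniformly as `n → ∞`. -/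
def Extensible (φ : Conf E → ℝ) : Prop :=
  ∀ a b : E, ∃ r : Conf E → ℝ,
    TendstoUniformly (fun n ω => rhoN φ (upd0 ω b) (upd0 ω a) n) r atTop

/-- The cocycle `ρ^φ(ξ,η) = lim_n ∑_{i=-n}^{n} (φ(S^i ξ) - φ(S^i η))`. -/
noncomputable def rho (φ : Conf E → ℝ) (ξ η : Conf E) : ℝ :=
  limUnder atTop (rhoN φ ξ η)

/-- `ξ` and `η` differ in at most finitely many coordinates. -/
def FinDiff (ξ η : Conf E) : Prop := {k : ℤ | ξ k ≠ η k}.Finite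

/-- `ovr Λ ξ ω` is the configuration `ξ_Λ ω_{ℤ∖Λ}`, equal to `ξ` on `Λ` and to `ω` off `Λ`. -/
def ovr (Λ : Finset ℤ) (ξ : {k // k ∈ Λ} → E) (ω : Conf E) : Conf E :=
  fun k => if h : k ∈ Λ then ξ ⟨k, h⟩ else ω k

/-- `γ` is a specification: each `γ_Λ(·|ω_{Λ^c})` is a probability distribution on `E^Λ`,
and the family is consistent (`γ_Λ = γ_Λ ∘ γ_V` for `V ⊆ Λ`); here `γ Λ ω` denotes
`γ_Λ(ω_Λ | ω_{Λ^c})`. -/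
def IsSpecification [Fintype E] (γ : Finset ℤ → Conf E → ℝ) : Prop :=
  (∀ (Λ : Finset ℤ) (ω : Conf E), 0 ≤ γ Λ ω) ∧
  (∀ (Λ : Finset ℤ) (ω : Conf E), ∑ ξ : {k // k ∈ Λ} → E, γ Λ (ovr Λ ξ ω) = 1) ∧
  (∀ V Λ : Finset ℤ, V ⊆ Λ → ∀ ω : Conf E,
     γ Λ ω = (∑ η : {k // k ∈ V} → E, γ Λ (ovr V η ω)) * γ V ω)

/-- Non-nullness: `inf_ω γ_Λ(ω_Λ|ω_{Λ^c}) > 0` for every finite `Λ`. -/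
def NonNull (γ : Finset ℤ → Conf E → ℝ) : Prop :=
  ∀ Λ : Finset ℤ, ∃ c > (0 : ℝ), ∀ ω : Conf E, c ≤ γ Λ ω

/-- Continuity (quasilocality): `ω ↦ γ_Λ(ω_Λ|ω_{Λ^c})` is continuous for every finite `Λ`. -/
def ContSpec [TopologicalSpace E] (γ : Finset ℤ → Conf E → ℝ) : Prop :=
  ∀ Λ : Finset ℤ, Continuous (γ Λ)

/-- A Gibbsian specification: a non-null continuous specification. -/
def IsGibbsSpec [Fintype E] [TopologicalSpace E] (γ : Finset ℤ → Conf E → ℝ) : Prop :=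
  IsSpecification γ ∧ NonNull γ ∧ ContSpec γ

/-- Translation invariance of a specification: `γ_{Λ+1} = γ_Λ ∘ S`. -/
def SpecTI (γ : Finset ℤ → Conf E → ℝ) : Prop :=
  ∀ (Λ : Finset ℤ) (ω : Conf E), γ (Λ.image (· + 1)) ω = γ Λ (shiftZ 1 ω)

/-- `μ` is a DLR-Gibbs measure for the specification `γ`: `μ` is a Borel probability
measure satisfying the DLR equations `∫ γ_Λ(f|·) dμ = ∫ f dμ` for every finite `Λ`
and every continuous `f` (equivalently, each `γ_Λ` is a version of the conditional
probabilities of `μ`). -/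
def IsDLRGibbs [Fintype E] [MeasurableSpace E] [TopologicalSpace E]
    (γ : Finset ℤ → Conf E → ℝ) (μ : Measure (Conf E)) : Prop :=
  IsProbabilityMeasure μ ∧
  ∀ (Λ : Finset ℤ) (f : Conf E → ℝ), Continuous f →
    ∫ ω, (∑ ξ : {k // k ∈ Λ} → E, γ Λ (ovr Λ ξ ω) * f (ovr Λ ξ ω)) ∂μ = ∫ ω, f ω ∂μ

/-- The specification `γ^φ` associated with an extensible potential `φ`:
`γ^φ_Λ(ω_Λ|ω_{Λ^c}) = (∑_{ξ_Λ ∈ E^Λ} exp ρ^φ(ξ_Λ ω_{ℤ∖Λ}, ω))⁻¹`. -/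
noncomputable def specOf [Fintype E] (φ : Conf E → ℝ) : Finset ℤ → Conf E → ℝ :=
  fun Λ ω => (∑ ξ : {k // k ∈ Λ} → E, Real.exp (rho φ (ovr Λ ξ ω) ω))⁻¹

/-- The configuration `𝐚_{-∞}^{-1} b ω_1^{∞}`: equal to `a` at all negative
coordinates, to `b` at coordinate `0`, and to `ω` at positive coordinates. -/
def bca (a : E) (ω : Conf E) (b : E) : Conf E :=
  fun k => if k < 0 then a else if k = 0 then b else ω k

/-- The potential associated with a specification:
`φ_γ(ω) = log (γ_{{0}}(ω_0 | 𝐚_{-∞}^{-1} ω_1^{∞}) / γ_{{0}}(a | 𝐚_{-∞}^{-1} ω_1^{∞}))`. -/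
noncomputable def phiOf (γ : Finset ℤ → Conf E → ℝ) (a : E) (ω : Conf E) : ℝ :=
  Real.log (γ ({0} : Finset ℤ) (bca a ω (ω 0)) / γ ({0} : Finset ℤ) (bca a ω a))

/-- `μ` is weak Bowen-Gibbs for `φ` with constant `P`. -/
def WeakBowenGibbs [MeasurableSpace E] (μ : Measure (Conf E)) (φ : Conf E → ℝ)
    (P : ℝ) : Prop :=
  ∃ C : ℕ → ℝ, (∀ n, 0 < C n) ∧
    Tendsto (fun n : ℕ => Real.log (C n) / n) atTop (𝓝 0) ∧
    ∀ (n : ℕ) (ω : Conf E),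
      (C n)⁻¹ ≤ (μ (cylPt ω n)).toReal / Real.exp (birk φ n ω - n * P) ∧
      (μ (cylPt ω n)).toReal / Real.exp (birk φ n ω - n * P) ≤ C n


/-- An interaction: a family `Φ = (Φ_V)` of continuous local functions,
`Φ_V(ω)` depending only on `ω_V`. -/
def IsInteraction [TopologicalSpace E] (Φ : Finset ℤ → Conf E → ℝ) : Prop :=
  (∀ V : Finset ℤ, Continuous (Φ V)) ∧
  ∀ (V : Finset ℤ) (ω ω' : Conf E), (∀ k ∈ V, ω k = ω' k) → Φ V ω = Φ V ω'

/-- Translation invariance of an interaction: `Φ_{V+1}(ω) = Φ_V(Sω)`. -/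
def InterTI (Φ : Finset ℤ → Conf E → ℝ) : Prop :=
  ∀ (V : Finset ℤ) (ω : Conf E), Φ (V.image (· + 1)) ω = Φ V (shiftZ 1 ω)

/-- `sup_ω |Φ_V(ω)|`. -/
noncomputable def supAbs (Φ : Finset ℤ → Conf E → ℝ) (V : Finset ℤ) : ℝ :=
  ⨆ ω : Conf E, |Φ V ω|

/-- Uniform absolute convergence: `∑_{V ∋ 0} sup_ω |Φ_V(ω)| < ∞`. -/
def UAC (Φ : Finset ℤ → Conf E → ℝ) : Prop :=
  Summable (fun V : {V : Finset ℤ // (0 : ℤ) ∈ V} => supAbs Φ V.1)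

/-- The Hamiltonian `H_Λ(ω) = ∑_{V ∩ Λ ≠ ∅} Φ_V(ω)`. -/
noncomputable def ham (Φ : Finset ℤ → Conf E → ℝ) (Λ : Finset ℤ) (ω : Conf E) : ℝ :=
  ∑' V : {V : Finset ℤ // (V ∩ Λ).Nonempty}, Φ V.1 ω

/-- The Gibbsian specification of the interaction `Φ`:
`γ^Φ_Λ(ξ_Λ|ω_{Λ^c}) = exp(-H_Λ(ξ_Λ ω_{Λ^c})) / Z_Λ(ω)`. -/
noncomputable def specOfInter [Fintype E] (Φ : Finset ℤ → Conf E → ℝ) :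
    Finset ℤ → Conf E → ℝ :=
  fun Λ ω => Real.exp (-(ham Φ Λ ω)) /
    ∑ ζ : {k // k ∈ Λ} → E, Real.exp (-(ham Φ Λ (ovr Λ ζ ω)))

/-- The potential `φ = -∑_{V ∋ 0, V ⊆ ℤ_{≥0}} Φ_V`. -/
noncomputable def phiInter (Φ : Finset ℤ → Conf E → ℝ) (ω : Conf E) : ℝ :=
  - ∑' V : {V : Finset ℤ // (0 : ℤ) ∈ V ∧ ∀ k ∈ V, (0 : ℤ) ≤ k}, Φ V.1 ω

section Aux

variable {E : Type*}

lemma shiftZ_shiftZ (i j : ℤ) (ω : Conf E) : shiftZ i (shiftZ j ω) = shiftZ (i + j) ω := by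
  funext k; simp [shiftZ, add_assoc]

lemma shiftZ_zero (ω : Conf E) : shiftZ 0 ω = ω := by funext k; simp [shiftZ]

lemma shiftZ_surjective (i : ℤ) : Function.Surjective (shiftZ i : Conf E → Conf E) := by
  intro ω
  exact ⟨shiftZ (-i) ω, by rw [shiftZ_shiftZ]; simp [shiftZ_zero]⟩

/-- Translation of a finite set. -/
def tauF (k : ℤ) (V : Finset ℤ) : Finset ℤ := V.image (· + k)

lemma mem_tauF {k a : ℤ} {V : Finset ℤ} : a ∈ tauF k V ↔ a - k ∈ V := by
  simp only [tauF, Finset.mem_image]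
  constructor
  · rintro ⟨b, hb, rfl⟩; simpa
  · intro h; exact ⟨a - k, h, by ring⟩

lemma tauF_tauF (i j : ℤ) (V : Finset ℤ) : tauF j (tauF i V) = tauF (i + j) V := by
  simp only [tauF, Finset.image_image]
  congr 1; funext a; simp [Function.comp, add_assoc]

lemma tauF_zero (V : Finset ℤ) : tauF 0 V = V := by
  ext a; simp [mem_tauF]

/-- Translation as an equivalence of `Finset ℤ`. -/
def tauE (k : ℤ) : Finset ℤ ≃ Finset ℤ where
  toFun := tauF k
  invFun := tauF (-k)
  left_inv := fun V => by rw [tauF_tauF]; simp [tauF_zero]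
  right_inv := fun V => by rw [tauF_tauF]; simp [tauF_zero]

variable (Φ : Finset ℤ → Conf E → ℝ)

lemma abs_le_supAbs [Fintype E] [TopologicalSpace E] (hΦ : IsInteraction Φ) (V : Finset ℤ) (ω : Conf E) :
    |Φ V ω| ≤ supAbs Φ V := by
  have hb : BddAbove (Set.range fun ω : Conf E => |Φ V ω|) := by
    have hsub : (Set.range fun ω : Conf E => |Φ V ω|) ⊆
        Set.range (fun ξ : {k // k ∈ V} → E => |Φ V (ovr V ξ ω)|) := by
      rintro x ⟨ω', rfl⟩
      refine ⟨fun k => ω' k.1, ?_⟩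
      simp only []
      congr 1
      exact hΦ.2 V _ _ (fun k hk => by simp [ovr, hk])
    exact ((Set.finite_range _).subset hsub).bddAbove
  exact le_ciSup hb ω

lemma supAbs_nonneg (V : Finset ℤ) : 0 ≤ supAbs Φ V :=
  Real.iSup_nonneg fun ω => abs_nonneg _

end Aux
section Aux2

variable {E : Type*} (Φ : Finset ℤ → Conf E → ℝ)

lemma supAbs_tau_one (hTI : InterTI Φ) (V : Finset ℤ) :
    supAbs Φ (tauF 1 V) = supAbs Φ V := by
  have h1 : (fun ω : Conf E => |Φ (tauF 1 V) ω|) = (fun ω => |Φ V ω|) ∘ shiftZ 1 := by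
    funext ω
    simp only [Function.comp_apply]
    rw [show tauF 1 V = V.image (· + 1) from rfl, hTI V ω]
  rw [supAbs, supAbs, iSup, iSup, h1, Function.Surjective.range_comp (shiftZ_surjective 1)]

lemma supAbs_tau_nat (hTI : InterTI Φ) (m : ℕ) (V : Finset ℤ) :
    supAbs Φ (tauF (m : ℤ) V) = supAbs Φ V := by
  induction m with
  | zero => rw [Nat.cast_zero, tauF_zero]
  | succ m ih =>
    have : tauF ((m + 1 : ℕ) : ℤ) V = tauF 1 (tauF (m : ℤ) V) := by
      rw [tauF_tauF]; push_cast; ring_nf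
    rw [this, supAbs_tau_one Φ hTI, ih]

lemma supAbs_tauZ (hTI : InterTI Φ) (k : ℤ) (V : Finset ℤ) :
    supAbs Φ (tauF k V) = supAbs Φ V := by
  rcases Int.eq_nat_or_neg k with ⟨m, rfl | rfl⟩
  · exact supAbs_tau_nat Φ hTI m V
  · have := supAbs_tau_nat Φ hTI m (tauF (-(m : ℤ)) V)
    rw [tauF_tauF, neg_add_cancel, tauF_zero] at this
    exact this.symm

lemma Phi_tau_nat (hTI : InterTI Φ) (m : ℕ) (V : Finset ℤ) (ω : Conf E) :
    Φ (tauF (m : ℤ) V) ω = Φ V (shiftZ (m : ℤ) ω) := by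
  induction m generalizing ω with
  | zero => rw [Nat.cast_zero, tauF_zero, shiftZ_zero]
  | succ m ih =>
    have h1 : tauF ((m + 1 : ℕ) : ℤ) V = tauF 1 (tauF (m : ℤ) V) := by
      rw [tauF_tauF]; push_cast; ring_nf
    rw [h1, show tauF 1 (tauF (m:ℤ) V) = (tauF (m:ℤ) V).image (· + 1) from rfl,
      hTI (tauF (m:ℤ) V) ω, ih (shiftZ 1 ω), shiftZ_shiftZ]
    push_cast; ring_nf

variable [Fintype E] [TopologicalSpace E]

lemma summable_ind_mem (hTI : InterTI Φ) (hUAC : UAC Φ) (k : ℤ) :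
    Summable ({V : Finset ℤ | k ∈ V}.indicator (supAbs Φ)) := by
  have h0 : Summable ({V : Finset ℤ | (0 : ℤ) ∈ V}.indicator (supAbs Φ)) := by
    rw [← summable_subtype_iff_indicator]
    exact hUAC
  have key : {V : Finset ℤ | k ∈ V}.indicator (supAbs Φ) =
      ({V : Finset ℤ | (0 : ℤ) ∈ V}.indicator (supAbs Φ)) ∘ (tauE (-k)) := by
    funext V
    by_cases h : k ∈ V
    · have h2 : tauF (-k) V ∈ {V : Finset ℤ | (0:ℤ) ∈ V} := by
        rw [Set.mem_setOf_eq, mem_tauF]; simpa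
      rw [Set.indicator_of_mem (show V ∈ {V : Finset ℤ | k ∈ V} from h),
        Function.comp_apply,
        show (tauE (-k)) V = tauF (-k) V from rfl, Set.indicator_of_mem h2,
        supAbs_tauZ Φ hTI]
    · rw [Set.indicator_of_notMem (show V ∉ {V : Finset ℤ | k ∈ V} from h),
        Function.comp_apply, Set.indicator_of_notMem]
      intro h2
      rw [Set.mem_setOf_eq, show (tauE (-k)) V = tauF (-k) V from rfl, mem_tauF] at h2
      simp at h2
      exact h h2
  rw [key]
  exact ((tauE (-k)).summable_iff).mpr h0

lemma summable_ind_of_cover (hTI : InterTI Φ) (hUAC : UAC Φ) (T : Set (Finset ℤ))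
    (Λ : Finset ℤ) (hcov : ∀ V ∈ T, ∃ k ∈ Λ, k ∈ V) :
    Summable (T.indicator (supAbs Φ)) := by
  have hnn : ∀ V, 0 ≤ T.indicator (supAbs Φ) V :=
    fun V => Set.indicator_nonneg (fun v _ => supAbs_nonneg Φ v) V
  refine Summable.of_nonneg_of_le hnn (fun V => ?_)
    (summable_sum (fun k (_ : k ∈ Λ) => summable_ind_mem Φ hTI hUAC k))
  by_cases h : V ∈ T
  · obtain ⟨k, hk, hkV⟩ := hcov V h
    rw [Set.indicator_of_mem h]
    calc supAbs Φ V = {V : Finset ℤ | k ∈ V}.indicator (supAbs Φ) V := by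
          rw [Set.indicator_of_mem (show V ∈ {V : Finset ℤ | k ∈ V} from hkV)]
      _ ≤ _ := Finset.single_le_sum
          (f := fun k => ({V : Finset ℤ | k ∈ V}.indicator (supAbs Φ)) V)
          (fun i _ => Set.indicator_nonneg (fun v _ => supAbs_nonneg Φ v) V) hk
  · rw [Set.indicator_of_notMem h]
    exact Finset.sum_nonneg fun i _ => Set.indicator_nonneg
      (fun v _ => supAbs_nonneg Φ v) V

lemma summable_ind_mono {T T' : Set (Finset ℤ)} (hsub : T ⊆ T')
    (h : Summable (T'.indicator (supAbs Φ))) :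
    Summable (T.indicator (supAbs Φ)) :=
  Summable.of_nonneg_of_le (fun V => Set.indicator_nonneg (fun v _ => supAbs_nonneg Φ v) V)
    (Set.indicator_le_indicator_of_subset hsub (fun v => supAbs_nonneg Φ v)) h

lemma summable_ind_phi (hΦ : IsInteraction Φ) {T : Set (Finset ℤ)}
    (hT : Summable (T.indicator (supAbs Φ))) (ω : Conf E) :
    Summable (T.indicator (fun V => Φ V ω)) := by
  refine Summable.of_norm_bounded hT (fun V => ?_)
  by_cases h : V ∈ T
  · rw [Set.indicator_of_mem h, Set.indicator_of_mem h]
    exact abs_le_supAbs Φ hΦ V ω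
  · simp [Set.indicator_of_notMem h]

lemma abs_tsum_ind_le (hΦ : IsInteraction Φ) {T : Set (Finset ℤ)}
    (hT : Summable (T.indicator (supAbs Φ))) (ω : Conf E) :
    |∑' V, T.indicator (fun V => Φ V ω) V| ≤ ∑' V, T.indicator (supAbs Φ) V := by
  have := tsum_of_norm_bounded (f := fun V => T.indicator (fun V => Φ V ω) V)
    hT.hasSum (fun V => ?_)
  · simpa using this
  · rw [Real.norm_eq_abs]
    by_cases h : V ∈ T
    · simp only [Set.indicator_of_mem h]
      exact abs_le_supAbs Φ hΦ V ω
    · simp [Set.indicator_of_notMem h]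

lemma tsum_ind_nonneg (T : Set (Finset ℤ)) :
    0 ≤ ∑' V, T.indicator (supAbs Φ) V :=
  tsum_nonneg (fun V => Set.indicator_nonneg (fun v _ => supAbs_nonneg Φ v) V)

end Aux2
section Aux3

variable {E : Type*}

/-- The interval `Λ_n = {0,…,n-1}` as a finset of `ℤ`. -/
noncomputable def lamN (n : ℕ) : Finset ℤ := Finset.Icc 0 ((n : ℤ) - 1)

lemma mem_lamN {n : ℕ} {k : ℤ} : k ∈ lamN n ↔ 0 ≤ k ∧ k < n := by
  rw [lamN, Finset.mem_Icc]; omega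

/-- Sets `V` meeting `Λ_n`. -/
def setA (n : ℕ) : Set (Finset ℤ) := {V | (V ∩ lamN n).Nonempty}

/-- Sets `V` with `min V ∈ [0,n)`. -/
def setB (n : ℕ) : Set (Finset ℤ) :=
  {V | (∀ k ∈ V, (0 : ℤ) ≤ k) ∧ (V ∩ lamN n).Nonempty}

/-- Sets `V` with `min V = k`. -/
def setB1 (k : ℤ) : Set (Finset ℤ) := {V | k ∈ V ∧ ∀ j ∈ V, k ≤ j}

/-- Sets `V` with `0 ∈ V ⊆ ℤ_{≥0}`. -/
def setB0 : Set (Finset ℤ) := {V | (0 : ℤ) ∈ V ∧ ∀ k ∈ V, (0 : ℤ) ≤ k}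

/-- Sets in `setB n` sticking out beyond `n-1`. -/
def setC (n : ℕ) : Set (Finset ℤ) := setB n ∩ {V | ∃ j ∈ V, (n : ℤ) ≤ j}

lemma setB_subset_setA (n : ℕ) : setB n ⊆ setA n := fun _ h => h.2

lemma setC_subset_setB (n : ℕ) : setC n ⊆ setB n := fun _ h => h.1

variable (Φ : Finset ℤ → Conf E → ℝ) [Fintype E] [TopologicalSpace E]

lemma summable_setA (hTI : InterTI Φ) (hUAC : UAC Φ) (n : ℕ) :
    Summable ((setA n).indicator (supAbs Φ)) := by
  refine summable_ind_of_cover Φ hTI hUAC _ (lamN n) (fun V hV => ?_)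
  obtain ⟨x, hx⟩ := hV
  rw [Finset.mem_inter] at hx
  exact ⟨x, hx.2, hx.1⟩

lemma summable_setB (hTI : InterTI Φ) (hUAC : UAC Φ) (n : ℕ) :
    Summable ((setB n).indicator (supAbs Φ)) :=
  summable_ind_mono Φ (setB_subset_setA n) (summable_setA Φ hTI hUAC n)

lemma summable_setC (hTI : InterTI Φ) (hUAC : UAC Φ) (n : ℕ) :
    Summable ((setC n).indicator (supAbs Φ)) :=
  summable_ind_mono Φ (subset_trans (setC_subset_setB n) (setB_subset_setA n))
    (summable_setA Φ hTI hUAC n)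

lemma summable_setB1 (hTI : InterTI Φ) (hUAC : UAC Φ) (k : ℤ) :
    Summable ((setB1 k).indicator (supAbs Φ)) :=
  summable_ind_mono Φ (fun V hV => hV.1) (summable_ind_mem Φ hTI hUAC k)

lemma summable_setB0 (hTI : InterTI Φ) (hUAC : UAC Φ) :
    Summable (setB0.indicator (supAbs Φ)) :=
  summable_ind_mono Φ (fun V hV => hV.1) (summable_ind_mem Φ hTI hUAC 0)

lemma ham_eq (n : ℕ) (ω : Conf E) :
    ham Φ (lamN n) ω = ∑' V, (setA n).indicator (fun V => Φ V ω) V := by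
  rw [ham]
  exact tsum_subtype {V : Finset ℤ | (V ∩ lamN n).Nonempty} (fun V => Φ V ω)

lemma phiInter_eq (ω : Conf E) :
    phiInter Φ ω = -∑' V, setB0.indicator (fun V => Φ V ω) V := by
  rw [phiInter]
  congr 1
  exact tsum_subtype {V : Finset ℤ | (0:ℤ) ∈ V ∧ ∀ k ∈ V, (0:ℤ) ≤ k} (fun V => Φ V ω)

lemma mem_setB1_tau {k : ℤ} {V : Finset ℤ} : tauF k V ∈ setB1 k ↔ V ∈ setB0 := by
  constructor
  · rintro ⟨h1, h2⟩
    rw [mem_tauF] at h1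
    simp only [sub_self] at h1  -- k - k = 0... careful: mem_tauF : k ∈ tauF k V ↔ k - k ∈ V
    refine ⟨h1, fun j hj => ?_⟩
    have : j + k ∈ tauF k V := by rw [mem_tauF]; simpa
    have := h2 _ this
    omega
  · rintro ⟨h1, h2⟩
    constructor
    · rw [mem_tauF]; simpa
    · intro j hj
      rw [mem_tauF] at hj
      have := h2 _ hj
      omega

lemma ind_setB_eq_sum (n : ℕ) (f : Finset ℤ → ℝ) (V : Finset ℤ) :
    (setB n).indicator f V = ∑ k ∈ Finset.range n, (setB1 (k : ℤ)).indicator f V := by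
  by_cases h : V ∈ setB n
  · obtain ⟨hpos, hne⟩ := h
    have hVne : V.Nonempty := by
      obtain ⟨x, hx⟩ := hne; exact ⟨x, (Finset.mem_inter.mp hx).1⟩
    set m := V.min' hVne with hm
    have hmV : m ∈ V := Finset.min'_mem _ _
    have hm0 : 0 ≤ m := hpos m hmV
    have hmlt : m < n := by
      obtain ⟨x, hx⟩ := hne
      rw [Finset.mem_inter] at hx
      have h1 := Finset.min'_le V x hx.1
      have h2 := mem_lamN.mp hx.2
      omega
    have hmem1 : V ∈ setB1 m := ⟨hmV, fun j hj => Finset.min'_le V j hj⟩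
    rw [Set.indicator_of_mem (show V ∈ setB n from ⟨hpos, hne⟩)]
    rw [Finset.sum_eq_single m.toNat]
    · rw [Set.indicator_of_mem]
      rw [Int.toNat_of_nonneg hm0]
      exact hmem1
    · intro k _ hkm
      apply Set.indicator_of_notMem
      rintro ⟨hkV, hkle⟩
      have h1 : (k : ℤ) ≤ m := hkle m hmV
      have h2 : m ≤ (k : ℤ) := Finset.min'_le V _ hkV
      apply hkm
      omega
    · intro hmn
      exfalso
      apply hmn
      rw [Finset.mem_range]
      omega
  · rw [Set.indicator_of_notMem h]
    symm
    apply Finset.sum_eq_zero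
    intro k hk
    apply Set.indicator_of_notMem
    rintro ⟨hkV, hkle⟩
    apply h
    refine ⟨fun j hj => le_trans (by positivity) (hkle j hj), ⟨k, ?_⟩⟩
    rw [Finset.mem_inter, mem_lamN]
    refine ⟨hkV, by positivity, ?_⟩
    exact_mod_cast Finset.mem_range.mp hk

lemma birk_eq (hΦ : IsInteraction Φ) (hTI : InterTI Φ) (hUAC : UAC Φ) (n : ℕ) (ω : Conf E) :
    birk (phiInter Φ) n ω = -∑' V, (setB n).indicator (fun V => Φ V ω) V := by
  have step1 : ∀ k : ℕ, phiInter Φ (shiftZ (k : ℤ) ω)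
      = -∑' V, (setB1 (k : ℤ)).indicator (fun V => Φ V ω) V := by
    intro k
    rw [phiInter_eq]
    congr 1
    rw [← Equiv.tsum_eq (tauE (k : ℤ)) ((setB1 (k : ℤ)).indicator (fun V => Φ V ω))]
    apply tsum_congr
    intro V
    have hEq : (tauE (k : ℤ)) V = tauF (k : ℤ) V := rfl
    by_cases h : V ∈ setB0
    · rw [hEq, Set.indicator_of_mem (mem_setB1_tau.mpr h), Set.indicator_of_mem h,
        Phi_tau_nat Φ hTI]
    · rw [hEq, Set.indicator_of_notMem (fun hh => h (mem_setB1_tau.mp hh)),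
        Set.indicator_of_notMem h]
  rw [birk]
  have step2 : ∀ k ∈ Finset.range n, phiInter Φ (shiftZ (k : ℤ) ω)
      = -∑' V, (setB1 (k : ℤ)).indicator (fun V => Φ V ω) V := fun k _ => step1 k
  rw [Finset.sum_congr rfl step2, Finset.sum_neg_distrib]
  congr 1
  rw [← Summable.tsum_finsetSum (fun k (_ : k ∈ Finset.range n) =>
    summable_ind_phi Φ hΦ (summable_setB1 Φ hTI hUAC (k : ℤ)) ω)]
  exact tsum_congr fun V => (ind_setB_eq_sum n _ V).symm

end Aux3
section Aux4

variable {E : Type*}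

/-- Sets containing `0` and not contained in `[-m,m]`. -/
def setR (m : ℕ) : Set (Finset ℤ) :=
  {V | (0 : ℤ) ∈ V ∧ ¬ V ⊆ Finset.Icc (-(m : ℤ)) (m : ℤ)}

variable (Φ : Finset ℤ → Conf E → ℝ) [Fintype E] [TopologicalSpace E]

/-- Boundary error: the tail of the interaction over sets meeting `[0,n)` with
negative minimum. -/
noncomputable def errH (n : ℕ) : ℝ :=
  ∑' V, ((setA n \ setB n : Set (Finset ℤ))).indicator (supAbs Φ) V

/-- Locality error: tail over sets with minimum in `[0,n)` sticking out past `n-1`. -/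
noncomputable def errL (n : ℕ) : ℝ :=
  ∑' V, (setC n).indicator (supAbs Φ) V

/-- The vanishing sequence dominating the errors. -/
noncomputable def vSeq (m : ℕ) : ℝ :=
  ∑' V, (setR m).indicator (supAbs Φ) V

lemma summable_setR (hTI : InterTI Φ) (hUAC : UAC Φ) (m : ℕ) :
    Summable ((setR m).indicator (supAbs Φ)) :=
  summable_ind_mono Φ (fun V hV => hV.1) (summable_ind_mem Φ hTI hUAC 0)

lemma vSeq_nonneg (m : ℕ) : 0 ≤ vSeq Φ m := tsum_ind_nonneg Φ _

lemma errH_nonneg (n : ℕ) : 0 ≤ errH Φ n := tsum_ind_nonneg Φ _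

lemma errL_nonneg (n : ℕ) : 0 ≤ errL Φ n := tsum_ind_nonneg Φ _

lemma vSeq_tendsto (hTI : InterTI Φ) (hUAC : UAC Φ) :
    Tendsto (vSeq Φ) atTop (𝓝 0) := by
  have h0 : (0 : ℝ) = ∑' _ : Finset ℤ, (0 : ℝ) := by rw [tsum_zero]
  rw [h0]
  refine tendsto_tsum_of_dominated_convergence
    (f := fun m V => (setR m).indicator (supAbs Φ) V)
    (bound := {V : Finset ℤ | (0 : ℤ) ∈ V}.indicator (supAbs Φ))
    (summable_ind_mem Φ hTI hUAC 0) (fun V => ?_) ?_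
  · have hev : ∀ᶠ m in atTop, (setR m).indicator (supAbs Φ) V = 0 := by
      filter_upwards [eventually_ge_atTop (V.sup (fun j => j.natAbs))] with m hm
      apply Set.indicator_of_notMem
      rintro ⟨-, hnsub⟩
      apply hnsub
      intro j hj
      have hle : j.natAbs ≤ m := le_trans (Finset.le_sup hj) hm
      rw [Finset.mem_Icc]
      omega
    exact tendsto_const_nhds.congr' (hev.mono fun m h => h.symm)
  · refine Filter.Eventually.of_forall (fun m V => ?_)
    rw [Real.norm_eq_abs, abs_of_nonneg
      (Set.indicator_nonneg (fun v _ => supAbs_nonneg Φ v) V)]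
    exact Set.indicator_le_indicator_of_subset (fun W hW => hW.1)
      (fun v => supAbs_nonneg Φ v) V

set_option maxHeartbeats 1000000 in
lemma tsum_ind_le_sum_vSeq (hTI : InterTI Φ) (hUAC : UAC Φ) (T : Set (Finset ℤ))
    (hT : Summable (T.indicator (supAbs Φ))) (n : ℕ) (c : ℕ → ℤ)
    (hcov : ∀ V ∈ T, ∃ m ∈ Finset.range n, tauF (c m) V ∈ setR m) :
    ∑' V, T.indicator (supAbs Φ) V ≤ ∑ m ∈ Finset.range n, vSeq Φ m := by
  have hsummand : ∀ m ∈ Finset.range n,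
      Summable (fun V => (setR m).indicator (supAbs Φ) (tauF (c m) V)) := by
    intro m _
    exact ((tauE (c m)).summable_iff (f := (setR m).indicator (supAbs Φ))).mpr
      (summable_setR Φ hTI hUAC m)
  have hle : ∀ V, T.indicator (supAbs Φ) V ≤
      ∑ m ∈ Finset.range n, (setR m).indicator (supAbs Φ) (tauF (c m) V) := by
    intro V
    by_cases h : V ∈ T
    · obtain ⟨m, hm, hmem⟩ := hcov V h
      rw [Set.indicator_of_mem h]
      calc supAbs Φ V = (setR m).indicator (supAbs Φ) (tauF (c m) V) := by
            rw [Set.indicator_of_mem hmem, supAbs_tauZ Φ hTI]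
        _ ≤ _ := Finset.single_le_sum
            (f := fun m => (setR m).indicator (supAbs Φ) (tauF (c m) V))
            (fun i _ => Set.indicator_nonneg (fun v _ => supAbs_nonneg Φ v) _) hm
    · rw [Set.indicator_of_notMem h]
      exact Finset.sum_nonneg fun i _ =>
        Set.indicator_nonneg (fun v _ => supAbs_nonneg Φ v) _
  calc ∑' V, T.indicator (supAbs Φ) V
      ≤ ∑' V, ∑ m ∈ Finset.range n, (setR m).indicator (supAbs Φ) (tauF (c m) V) :=
        Summable.tsum_le_tsum hle hT (summable_sum hsummand)
    _ = ∑ m ∈ Finset.range n, ∑' V, (setR m).indicator (supAbs Φ) (tauF (c m) V) :=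
        Summable.tsum_finsetSum hsummand
    _ = ∑ m ∈ Finset.range n, vSeq Φ m := by
        refine Finset.sum_congr rfl (fun m _ => ?_)
        exact Equiv.tsum_eq (tauE (c m)) ((setR m).indicator (supAbs Φ))

lemma errH_le (hTI : InterTI Φ) (hUAC : UAC Φ) (n : ℕ) :
    errH Φ n ≤ ∑ m ∈ Finset.range n, vSeq Φ m := by
  refine tsum_ind_le_sum_vSeq Φ hTI hUAC _
    (summable_ind_mono Φ Set.diff_subset (summable_setA Φ hTI hUAC n)) n
    (fun m => -(m : ℤ)) (fun V hV => ?_)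
  obtain ⟨hA, hnB⟩ := hV
  obtain ⟨x, hx⟩ := hA
  rw [Finset.mem_inter] at hx
  obtain ⟨hxV, hxI⟩ := hx
  rw [mem_lamN] at hxI
  have hj : ∃ j ∈ V, j < 0 := by
    by_contra hcon
    push_neg at hcon
    exact hnB ⟨fun j hj => hcon j hj, ⟨x, Finset.mem_inter.mpr ⟨hxV, mem_lamN.mpr hxI⟩⟩⟩
  obtain ⟨j, hjV, hj0⟩ := hj
  refine ⟨x.toNat, Finset.mem_range.mpr (by omega), ?_⟩
  have hxc : ((x.toNat : ℤ)) = x := Int.toNat_of_nonneg hxI.1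
  have hgoal : tauF (-(x.toNat : ℤ)) V ∈ setR x.toNat := by
    constructor
    · rw [mem_tauF]
      have h9 : (0:ℤ) - -(x.toNat : ℤ) = x := by omega
      rw [h9]; exact hxV
    · intro hsub
      have hmem : j - x ∈ tauF (-(x.toNat : ℤ)) V := by
        rw [mem_tauF]
        have h9 : j - x - -(x.toNat : ℤ) = j := by omega
        rw [h9]; exact hjV
      have := hsub hmem
      rw [Finset.mem_Icc] at this
      omega
  exact hgoal

lemma errL_le (hTI : InterTI Φ) (hUAC : UAC Φ) (n : ℕ) :
    errL Φ n ≤ ∑ m ∈ Finset.range n, vSeq Φ m := by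
  refine tsum_ind_le_sum_vSeq Φ hTI hUAC _
    (summable_setC Φ hTI hUAC n) n
    (fun m => -((n : ℤ) - 1 - (m : ℤ))) (fun V hV => ?_)
  obtain ⟨⟨hpos, hne⟩, j, hjV, hjn⟩ := hV
  have hVne : V.Nonempty := by
    obtain ⟨x, hx⟩ := hne; exact ⟨x, (Finset.mem_inter.mp hx).1⟩
  set q := V.min' hVne with hq
  have hqV : q ∈ V := Finset.min'_mem _ _
  have hq0 : 0 ≤ q := hpos q hqV
  have hqlt : q < n := by
    obtain ⟨x, hx⟩ := hne
    rw [Finset.mem_inter] at hx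
    have h1 := Finset.min'_le V x hx.1
    have h2 := mem_lamN.mp hx.2
    omega
  refine ⟨((n : ℤ) - 1 - q).toNat, Finset.mem_range.mpr (by omega), ?_⟩
  have hmc : (((((n : ℤ) - 1 - q).toNat) : ℤ)) = (n : ℤ) - 1 - q :=
    Int.toNat_of_nonneg (by omega)
  have hgoal : tauF (-q) V ∈ setR ((n : ℤ) - 1 - q).toNat := by
    constructor
    · rw [mem_tauF]
      have h9 : (0:ℤ) - -q = q := by omega
      rw [h9]; exact hqV
    · intro hsub
      have hmem : j - q ∈ tauF (-q) V := by
        rw [mem_tauF]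
        have h9 : j - q - -q = j := by omega
        rw [h9]; exact hjV
      have := hsub hmem
      rw [Finset.mem_Icc] at this
      omega
  have harg : -((n : ℤ) - 1 - ((((n : ℤ) - 1 - q).toNat) : ℤ)) = -q := by omega
  rw [harg]
  exact hgoal

lemma err_div_tendsto_aux (hTI : InterTI Φ) (hUAC : UAC Φ) (e : ℕ → ℝ)
    (he0 : ∀ n, 0 ≤ e n) (hele : ∀ n, e n ≤ ∑ m ∈ Finset.range n, vSeq Φ m) :
    Tendsto (fun n : ℕ => e n / n) atTop (𝓝 0) := by
  have hc := (vSeq_tendsto Φ hTI hUAC).cesaro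
  refine squeeze_zero (fun n => div_nonneg (he0 n) (Nat.cast_nonneg n)) (fun n => ?_) hc
  calc e n / n ≤ (∑ m ∈ Finset.range n, vSeq Φ m) / n := by
        rcases Nat.eq_zero_or_pos n with rfl | hn
        · simp
        · have hn' : (0:ℝ) < n := by exact_mod_cast hn
          exact (div_le_div_iff_of_pos_right hn').mpr (hele n)
    _ = _ := by rw [div_eq_inv_mul]

lemma errH_div_tendsto (hTI : InterTI Φ) (hUAC : UAC Φ) :
    Tendsto (fun n : ℕ => errH Φ n / n) atTop (𝓝 0) :=
  err_div_tendsto_aux Φ hTI hUAC _ (errH_nonneg Φ) (errH_le Φ hTI hUAC)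

lemma errL_div_tendsto (hTI : InterTI Φ) (hUAC : UAC Φ) :
    Tendsto (fun n : ℕ => errL Φ n / n) atTop (𝓝 0) :=
  err_div_tendsto_aux Φ hTI hUAC _ (errL_nonneg Φ) (errL_le Φ hTI hUAC)

end Aux4
section Aux5

variable {E : Type*} (Φ : Finset ℤ → Conf E → ℝ) [Fintype E] [TopologicalSpace E]

/-- The total interaction strength at the origin (one-sided). -/
noncomputable def Kc : ℝ := ∑' V, setB0.indicator (supAbs Φ) V

lemma Kc_nonneg : 0 ≤ Kc Φ := tsum_ind_nonneg Φ _

lemma abs_phiInter_le (hΦ : IsInteraction Φ) (hTI : InterTI Φ) (hUAC : UAC Φ)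
    (ω : Conf E) : |phiInter Φ ω| ≤ Kc Φ := by
  rw [phiInter_eq, abs_neg]
  exact abs_tsum_ind_le Φ hΦ (summable_setB0 Φ hTI hUAC) ω

lemma abs_birk_le (hΦ : IsInteraction Φ) (hTI : InterTI Φ) (hUAC : UAC Φ)
    (n : ℕ) (ω : Conf E) : |birk (phiInter Φ) n ω| ≤ n * Kc Φ := by
  rw [birk]
  calc |∑ k ∈ Finset.range n, phiInter Φ (shiftZ (k : ℤ) ω)|
      ≤ ∑ k ∈ Finset.range n, |phiInter Φ (shiftZ (k : ℤ) ω)| :=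
        Finset.abs_sum_le_sum_abs _ _
    _ ≤ ∑ _k ∈ Finset.range n, Kc Φ :=
        Finset.sum_le_sum fun k _ => abs_phiInter_le Φ hΦ hTI hUAC _
    _ = n * Kc Φ := by rw [Finset.sum_const, Finset.card_range, nsmul_eq_mul]

lemma cylW_nonempty [Nonempty E] {n : ℕ} (w : Fin n → E) : (cylW w).Nonempty := by
  classical
  refine ⟨fun k => if h : 0 ≤ k ∧ k < n then w ⟨k.toNat, by omega⟩
    else Classical.arbitrary E, fun j => ?_⟩
  have h : (0 : ℤ) ≤ ((j : ℕ) : ℤ) ∧ ((j : ℕ) : ℤ) < n := by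
    constructor
    · positivity
    · exact_mod_cast j.2
  show (if h : (0:ℤ) ≤ ((j:ℕ):ℤ) ∧ ((j:ℕ):ℤ) < n then w ⟨((j:ℕ):ℤ).toNat, by omega⟩
    else Classical.arbitrary E) = w j
  rw [dif_pos h]
  congr 1

lemma mem_cylW_birk_le (hΦ : IsInteraction Φ) (hTI : InterTI Φ) (hUAC : UAC Φ)
    {n : ℕ} {w : Fin n → E} {ω : Conf E} (hω : ω ∈ cylW w) :
    Real.exp (birk (phiInter Φ) n ω) ≤ Real.exp ((n : ℝ) * Kc Φ) :=
  Real.exp_le_exp.mpr (le_trans (le_abs_self _) (abs_birk_le Φ hΦ hTI hUAC n ω))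

lemma bddAbove_exp_birk (hΦ : IsInteraction Φ) (hTI : InterTI Φ) (hUAC : UAC Φ)
    (n : ℕ) (w : Fin n → E) :
    BddAbove ((fun ω => Real.exp (birk (phiInter Φ) n ω)) '' cylW w) := by
  refine ⟨Real.exp ((n : ℝ) * Kc Φ), ?_⟩
  rintro x ⟨ω, hω, rfl⟩
  exact mem_cylW_birk_le Φ hΦ hTI hUAC hω

variable [Nonempty E]

/-- The partition function `Q_n = ∑_w sup_{[w]} e^{S_n φ}`. -/
noncomputable def Qn (n : ℕ) : ℝ :=
  ∑ w : Fin n → E, sSup ((fun ω => Real.exp (birk (phiInter Φ) n ω)) '' cylW w)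

lemma press_eq_limsup :
    press (phiInter Φ) = Filter.limsup (fun n : ℕ => Real.log (Qn Φ n) / n) atTop := rfl

lemma sSup_exp_birk_pos (hΦ : IsInteraction Φ) (hTI : InterTI Φ) (hUAC : UAC Φ)
    (n : ℕ) (w : Fin n → E) :
    0 < sSup ((fun ω => Real.exp (birk (phiInter Φ) n ω)) '' cylW w) := by
  obtain ⟨ω, hω⟩ := cylW_nonempty w
  exact lt_of_lt_of_le (Real.exp_pos _)
    (le_csSup (bddAbove_exp_birk Φ hΦ hTI hUAC n w) ⟨ω, hω, rfl⟩)

lemma Qn_pos (hΦ : IsInteraction Φ) (hTI : InterTI Φ) (hUAC : UAC Φ) (n : ℕ) :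
    0 < Qn Φ n :=
  Finset.sum_pos (fun w _ => sSup_exp_birk_pos Φ hΦ hTI hUAC n w) Finset.univ_nonempty

lemma Qn_zero : Qn Φ 0 = 1 := by
  rw [Qn]
  have h1 : ∀ w : Fin 0 → E,
      sSup ((fun ω => Real.exp (birk (phiInter Φ) 0 ω)) '' cylW w) = 1 := by
    intro w
    have h2 : cylW w = Set.univ := Set.eq_univ_of_forall (fun ω j => j.elim0)
    have h3 : (fun ω : Conf E => Real.exp (birk (phiInter Φ) 0 ω))
        = fun _ => (1 : ℝ) := by
      funext ω; simp [birk]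
    rw [h2, h3, Set.image_univ, Set.range_const, csSup_singleton]
  rw [Finset.sum_congr rfl (fun w _ => h1 w)]
  simp

lemma birk_add (φ : Conf E → ℝ) (n m : ℕ) (ω : Conf E) :
    birk φ (n + m) ω = birk φ n ω + birk φ m (shiftZ (n : ℤ) ω) := by
  rw [birk, birk, birk, Finset.sum_range_add]
  congr 1
  refine Finset.sum_congr rfl (fun k _ => ?_)
  rw [shiftZ_shiftZ]
  congr 1
  push_cast
  ring

/-- Concatenation of words as an equivalence. -/
def joinE (E : Type*) (n m : ℕ) : ((Fin n → E) × (Fin m → E)) ≃ (Fin (n + m) → E) :=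
  (Equiv.sumArrowEquivProdArrow (Fin n) (Fin m) E).symm.trans
    (Equiv.arrowCongr finSumFinEquiv (Equiv.refl E))

lemma joinE_castAdd {n m : ℕ} (u : Fin n → E) (v : Fin m → E) (i : Fin n) :
    joinE E n m (u, v) (Fin.castAdd m i) = u i := by
  simp [joinE, Equiv.sumArrowEquivProdArrow, Equiv.arrowCongr,
    finSumFinEquiv_symm_apply_castAdd]

lemma joinE_natAdd {n m : ℕ} (u : Fin n → E) (v : Fin m → E) (i : Fin m) :
    joinE E n m (u, v) (Fin.natAdd n i) = v i := by
  simp [joinE, Equiv.sumArrowEquivProdArrow, Equiv.arrowCongr,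
    finSumFinEquiv_symm_apply_natAdd]

lemma Qn_submul (hΦ : IsInteraction Φ) (hTI : InterTI Φ) (hUAC : UAC Φ) (n m : ℕ) :
    Qn Φ (n + m) ≤ Qn Φ n * Qn Φ m := by
  have hrw : Qn Φ (n + m) = ∑ p : (Fin n → E) × (Fin m → E),
      sSup ((fun ω => Real.exp (birk (phiInter Φ) (n + m) ω)) ''
        cylW (joinE E n m p)) := by
    rw [Qn]
    exact (Equiv.sum_comp (joinE E n m) _).symm
  rw [hrw, Fintype.sum_prod_type]
  have key : ∀ (u : Fin n → E) (v : Fin m → E),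
      sSup ((fun ω => Real.exp (birk (phiInter Φ) (n + m) ω)) ''
        cylW (joinE E n m (u, v)))
      ≤ sSup ((fun ω => Real.exp (birk (phiInter Φ) n ω)) '' cylW u) *
        sSup ((fun ω => Real.exp (birk (phiInter Φ) m ω)) '' cylW v) := by
    intro u v
    apply csSup_le (Set.Nonempty.image _ (cylW_nonempty _))
    rintro x ⟨ω, hω, rfl⟩
    have hu : ω ∈ cylW u := by
      intro i
      have h1 := hω (Fin.castAdd m i)
      rwa [joinE_castAdd, Fin.coe_castAdd] at h1
    have hv : shiftZ (n : ℤ) ω ∈ cylW v := by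
      intro i
      have h1 := hω (Fin.natAdd n i)
      rw [joinE_natAdd, Fin.coe_natAdd] at h1
      rw [shiftZ]
      rw [← h1]
      congr 1
      push_cast
      ring
    show Real.exp (birk (phiInter Φ) (n + m) ω) ≤ _
    rw [birk_add, Real.exp_add]
    have h2 : 0 < sSup ((fun ω => Real.exp (birk (phiInter Φ) m ω)) '' cylW v) :=
      sSup_exp_birk_pos Φ hΦ hTI hUAC m v
    exact mul_le_mul
      (le_csSup (bddAbove_exp_birk Φ hΦ hTI hUAC n u) ⟨ω, hu, rfl⟩)
      (le_csSup (bddAbove_exp_birk Φ hΦ hTI hUAC m v) ⟨shiftZ (n : ℤ) ω, hv, rfl⟩)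
      (Real.exp_pos _).le
      (le_of_lt (sSup_exp_birk_pos Φ hΦ hTI hUAC n u))
  calc ∑ u : Fin n → E, ∑ v : Fin m → E,
        sSup ((fun ω => Real.exp (birk (phiInter Φ) (n + m) ω)) ''
          cylW (joinE E n m (u, v)))
      ≤ ∑ u : Fin n → E, ∑ v : Fin m → E,
        sSup ((fun ω => Real.exp (birk (phiInter Φ) n ω)) '' cylW u) *
        sSup ((fun ω => Real.exp (birk (phiInter Φ) m ω)) '' cylW v) :=
        Finset.sum_le_sum fun u _ => Finset.sum_le_sum fun v _ => key u v
    _ = Qn Φ n * Qn Φ m := by rw [Qn, Qn, Finset.sum_mul_sum]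

lemma aSeq_subadditive (hΦ : IsInteraction Φ) (hTI : InterTI Φ) (hUAC : UAC Φ) :
    Subadditive (fun n => Real.log (Qn Φ n)) := by
  intro n m
  calc Real.log (Qn Φ (n + m)) ≤ Real.log (Qn Φ n * Qn Φ m) :=
        Real.log_le_log (Qn_pos Φ hΦ hTI hUAC _) (Qn_submul Φ hΦ hTI hUAC n m)
    _ = Real.log (Qn Φ n) + Real.log (Qn Φ m) :=
        Real.log_mul (Qn_pos Φ hΦ hTI hUAC n).ne' (Qn_pos Φ hΦ hTI hUAC m).ne'

lemma Qn_ge_exp (hΦ : IsInteraction Φ) (hTI : InterTI Φ) (hUAC : UAC Φ) (n : ℕ)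
    (ω : Conf E) : Real.exp (birk (phiInter Φ) n ω) ≤ Qn Φ n := by
  classical
  set w : Fin n → E := fun j => ω ((j : ℕ) : ℤ) with hw
  have hωw : ω ∈ cylW w := fun j => rfl
  calc Real.exp (birk (phiInter Φ) n ω)
      ≤ sSup ((fun ω => Real.exp (birk (phiInter Φ) n ω)) '' cylW w) :=
        le_csSup (bddAbove_exp_birk Φ hΦ hTI hUAC n w) ⟨ω, hωw, rfl⟩
    _ ≤ Qn Φ n := Finset.single_le_sum
        (f := fun w => sSup ((fun ω => Real.exp (birk (phiInter Φ) n ω)) '' cylW w))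
        (fun w _ => (sSup_exp_birk_pos Φ hΦ hTI hUAC n w).le) (Finset.mem_univ w)

lemma aSeq_bddBelow (hΦ : IsInteraction Φ) (hTI : InterTI Φ) (hUAC : UAC Φ) :
    BddBelow (Set.range fun n : ℕ => Real.log (Qn Φ n) / n) := by
  refine ⟨-Kc Φ, ?_⟩
  rintro x ⟨n, rfl⟩
  rcases Nat.eq_zero_or_pos n with rfl | hn
  · simp only [Nat.cast_zero, div_zero]
    exact neg_nonpos_of_nonneg (Kc_nonneg Φ)
  · have hn' : (0 : ℝ) < n := by exact_mod_cast hn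
    show -Kc Φ ≤ Real.log (Qn Φ n) / n
    rw [le_div_iff₀ hn']
    have h1 : Real.exp (birk (phiInter Φ) n (Classical.arbitrary (Conf E)))
        ≤ Qn Φ n := Qn_ge_exp Φ hΦ hTI hUAC n _
    have h2 := Real.log_le_log (Real.exp_pos _) h1
    rw [Real.log_exp] at h2
    have h3 : -((n : ℝ) * Kc Φ) ≤ birk (phiInter Φ) n (Classical.arbitrary (Conf E)) := by
      have := abs_birk_le Φ hΦ hTI hUAC n (Classical.arbitrary (Conf E))
      have := neg_abs_le (birk (phiInter Φ) n (Classical.arbitrary (Conf E)))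
      linarith [abs_birk_le Φ hΦ hTI hUAC n (Classical.arbitrary (Conf E)),
        neg_abs_le (birk (phiInter Φ) n (Classical.arbitrary (Conf E)))]
    calc -Kc Φ * n = -((n : ℝ) * Kc Φ) := by ring
      _ ≤ _ := le_trans h3 h2

lemma press_facts (hΦ : IsInteraction Φ) (hTI : InterTI Φ) (hUAC : UAC Φ) :
    (∀ n : ℕ, (n : ℝ) * press (phiInter Φ) ≤ Real.log (Qn Φ n)) ∧
    Tendsto (fun n : ℕ =>
      (Real.log (Qn Φ n) - n * press (phiInter Φ)) / n) atTop (𝓝 0) := by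
  have hsub := aSeq_subadditive Φ hΦ hTI hUAC
  have hbdd := aSeq_bddBelow Φ hΦ hTI hUAC
  have htend := hsub.tendsto_lim hbdd
  have hP : press (phiInter Φ) = hsub.lim := by
    rw [press_eq_limsup]
    exact htend.limsup_eq
  constructor
  · intro n
    rcases Nat.eq_zero_or_pos n with rfl | hn
    · simp [Qn_zero]
    · have hn' : (0 : ℝ) < n := by exact_mod_cast hn
      have h1 := hsub.lim_le_div hbdd (Nat.pos_iff_ne_zero.mp hn)
      rw [← hP] at h1
      rw [mul_comm]
      exact (le_div_iff₀ hn').mp h1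
  · have h1 : Tendsto (fun n : ℕ => Real.log (Qn Φ n) / n - press (phiInter Φ))
        atTop (𝓝 0) := by
      rw [hP]
      simpa using htend.sub_const hsub.lim
    refine Tendsto.congr' ?_ h1
    filter_upwards [eventually_ge_atTop 1] with n hn
    have hn' : (n : ℝ) ≠ 0 := by positivity
    rw [sub_div, mul_comm, mul_div_assoc, div_self hn', mul_one]

end Aux5
section Aux6

variable {E : Type*} (Φ : Finset ℤ → Conf E → ℝ) [Fintype E] [TopologicalSpace E]

lemma birk_diff_le (hΦ : IsInteraction Φ) (hTI : InterTI Φ) (hUAC : UAC Φ) (n : ℕ)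
    {ω' ω'' : Conf E} (hagree : ∀ k : ℤ, 0 ≤ k → k < n → ω' k = ω'' k) :
    |birk (phiInter Φ) n ω' - birk (phiInter Φ) n ω''| ≤ 2 * errL Φ n := by
  have hs' : Summable ((setB n).indicator (fun V => Φ V ω')) :=
    summable_ind_phi Φ hΦ (summable_setB Φ hTI hUAC n) ω'
  have hs'' : Summable ((setB n).indicator (fun V => Φ V ω'')) :=
    summable_ind_phi Φ hΦ (summable_setB Φ hTI hUAC n) ω''
  have key : birk (phiInter Φ) n ω' - birk (phiInter Φ) n ω''
      = ∑' V, (setC n).indicator (fun V => Φ V ω'' - Φ V ω') V := by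
    rw [birk_eq Φ hΦ hTI hUAC, birk_eq Φ hΦ hTI hUAC, neg_sub_neg, ← Summable.tsum_sub hs'' hs']
    apply tsum_congr
    intro V
    by_cases hC : V ∈ setC n
    · have hB := setC_subset_setB n hC
      rw [Set.indicator_of_mem hB, Set.indicator_of_mem hB, Set.indicator_of_mem hC]
    · rw [Set.indicator_of_notMem hC]
      by_cases hB : V ∈ setB n
      · rw [Set.indicator_of_mem hB, Set.indicator_of_mem hB]
        have hlt : ∀ k ∈ V, k < (n : ℤ) := by
          intro k hk
          by_contra hcon
          exact hC ⟨hB, ⟨k, hk, by omega⟩⟩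
        have : Φ V ω'' = Φ V ω' :=
          hΦ.2 V ω'' ω' (fun k hk => (hagree k (hB.1 k hk) (hlt k hk)).symm)
        rw [this, sub_self]
      · rw [Set.indicator_of_notMem hB, Set.indicator_of_notMem hB, sub_self]
  rw [key]
  have hb := (summable_setC Φ hTI hUAC n).hasSum.mul_left 2
  have hres := tsum_of_norm_bounded
    (f := (setC n).indicator (fun V => Φ V ω'' - Φ V ω')) hb (fun V => ?_)
  · simpa [errL] using hres
  rw [Real.norm_eq_abs]
  by_cases h : V ∈ setC n
  · rw [Set.indicator_of_mem h, Set.indicator_of_mem h]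
    calc |Φ V ω'' - Φ V ω'| ≤ |Φ V ω''| + |Φ V ω'| := abs_sub _ _
      _ ≤ supAbs Φ V + supAbs Φ V :=
          add_le_add (abs_le_supAbs Φ hΦ V ω'') (abs_le_supAbs Φ hΦ V ω')
      _ = 2 * supAbs Φ V := by ring
  · simp [Set.indicator_of_notMem h]

lemma ham_birk_diff (hΦ : IsInteraction Φ) (hTI : InterTI Φ) (hUAC : UAC Φ) (n : ℕ)
    (ω : Conf E) :
    |(-(ham Φ (lamN n) ω)) - birk (phiInter Φ) n ω| ≤ errH Φ n := by
  have hsB : Summable ((setB n).indicator (fun V => Φ V ω)) :=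
    summable_ind_phi Φ hΦ (summable_setB Φ hTI hUAC n) ω
  have hsD : Summable (((setA n \ setB n : Set (Finset ℤ))).indicator (fun V => Φ V ω)) :=
    summable_ind_phi Φ hΦ
      (summable_ind_mono Φ Set.diff_subset (summable_setA Φ hTI hUAC n)) ω
  have hsplit : ∀ V, (setA n).indicator (fun V => Φ V ω) V
      = (setB n).indicator (fun V => Φ V ω) V
        + ((setA n \ setB n : Set (Finset ℤ))).indicator (fun V => Φ V ω) V := by
    intro V
    by_cases hB : V ∈ setB n
    · rw [Set.indicator_of_mem hB, Set.indicator_of_mem (setB_subset_setA n hB),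
        Set.indicator_of_notMem (fun h => h.2 hB), add_zero]
    · rw [Set.indicator_of_notMem hB, zero_add]
      by_cases hA : V ∈ setA n
      · rw [Set.indicator_of_mem hA, Set.indicator_of_mem ((Set.mem_diff _).mpr ⟨hA, hB⟩)]
      · rw [Set.indicator_of_notMem hA,
          Set.indicator_of_notMem (fun h => hA h.1)]
  have hA : ∑' V, (setA n).indicator (fun V => Φ V ω) V
      = (∑' V, (setB n).indicator (fun V => Φ V ω) V)
        + ∑' V, ((setA n \ setB n : Set (Finset ℤ))).indicator (fun V => Φ V ω) V := by
    rw [← Summable.tsum_add hsB hsD]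
    exact tsum_congr hsplit
  rw [ham_eq, birk_eq Φ hΦ hTI hUAC, hA]
  have : -((∑' V, (setB n).indicator (fun V => Φ V ω) V)
        + ∑' V, ((setA n \ setB n : Set (Finset ℤ))).indicator (fun V => Φ V ω) V)
      - -(∑' V, (setB n).indicator (fun V => Φ V ω) V)
      = -(∑' V, ((setA n \ setB n : Set (Finset ℤ))).indicator (fun V => Φ V ω) V) := by
    ring
  rw [this, abs_neg]
  exact abs_tsum_ind_le Φ hΦ
    (summable_ind_mono Φ Set.diff_subset (summable_setA Φ hTI hUAC n)) ω

lemma ovr_ovr (Λ : Finset ℤ) (ζ ξ : {k // k ∈ Λ} → E) (η : Conf E) :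
    ovr Λ ζ (ovr Λ ξ η) = ovr Λ ζ η := by
  funext k
  by_cases h : k ∈ Λ <;> simp [ovr, h]

/-- The canonical identification `Fin n ≃ Λ_n`. -/
def iN (n : ℕ) : Fin n ≃ {k // k ∈ lamN n} where
  toFun j := ⟨((j : ℕ) : ℤ), mem_lamN.mpr ⟨Int.natCast_nonneg _, by exact_mod_cast j.2⟩⟩
  invFun k := ⟨k.1.toNat, by have := mem_lamN.mp k.2; omega⟩
  left_inv j := by ext; simp
  right_inv k := by
    ext
    have := mem_lamN.mp k.2
    simp
    omega

/-- The word read off from `ζ : E^{Λ_n}`. -/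
def wOf {n : ℕ} (ζ : {k // k ∈ lamN n} → E) : Fin n → E := fun j => ζ (iN n j)

lemma ovr_mem_cylW {n : ℕ} (ζ : {k // k ∈ lamN n} → E) (η : Conf E) :
    ovr (lamN n) ζ η ∈ cylW (wOf ζ) := by
  intro j
  have hj : ((j : ℕ) : ℤ) ∈ lamN n := (iN n j).2
  rw [show wOf ζ j = ζ (iN n j) from rfl]
  simp only [ovr, dif_pos hj]
  rfl

lemma agree_of_mem_cylW {n : ℕ} {w : Fin n → E} {ω' ω'' : Conf E}
    (h' : ω' ∈ cylW w) (h'' : ω'' ∈ cylW w) :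
    ∀ k : ℤ, 0 ≤ k → k < n → ω' k = ω'' k := by
  intro k hk0 hkn
  obtain ⟨m, rfl⟩ : ∃ m : ℕ, (m : ℤ) = k := ⟨k.toNat, Int.toNat_of_nonneg hk0⟩
  have hm : m < n := by exact_mod_cast hkn
  have h1 := h' ⟨m, hm⟩
  have h2 := h'' ⟨m, hm⟩
  exact h1.trans h2.symm

end Aux6
section Aux7

variable {E : Type*} (Φ : Finset ℤ → Conf E → ℝ)
  [Fintype E] [TopologicalSpace E] [Nonempty E]

lemma sum_sSup_eq_Qn (n : ℕ) :
    ∑ ζ : {k // k ∈ lamN n} → E,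
      sSup ((fun ω => Real.exp (birk (phiInter Φ) n ω)) '' cylW (wOf ζ)) = Qn Φ n := by
  rw [Qn]
  exact Equiv.sum_comp (Equiv.arrowCongr (iN n).symm (Equiv.refl E))
    (fun w => sSup ((fun ω => Real.exp (birk (phiInter Φ) n ω)) '' cylW w))

set_option maxHeartbeats 1600000 in
lemma spec_bound_main (hΦ : IsInteraction Φ) (hTI : InterTI Φ) (hUAC : UAC Φ)
    (n : ℕ) (ω η : Conf E) :
    Real.exp (-(2 * errH Φ n + 2 * errL Φ n
        + (Real.log (Qn Φ n) - n * press (phiInter Φ))))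
      * Real.exp (birk (phiInter Φ) n ω - n * press (phiInter Φ))
      ≤ specOfInter Φ (lamN n) (ovr (lamN n) (fun k => ω k.1) η) ∧
    specOfInter Φ (lamN n) (ovr (lamN n) (fun k => ω k.1) η)
      ≤ Real.exp (2 * errH Φ n + 4 * errL Φ n)
      * Real.exp (birk (phiInter Φ) n ω - n * press (phiInter Φ)) := by
  have hQpos := Qn_pos Φ hΦ hTI hUAC n
  set P := press (phiInter Φ) with hPdef
  set a := Real.log (Qn Φ n) with hadef
  have hQ : Qn Φ n = Real.exp a := (Real.exp_log hQpos).symm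
  have haP : (n : ℝ) * P ≤ a := (press_facts Φ hΦ hTI hUAC).1 n
  set wξ : {k // k ∈ lamN n} → E := fun k => ω k.1 with hwξ
  have hagree : ∀ k : ℤ, 0 ≤ k → k < n → (ovr (lamN n) wξ η) k = ω k := by
    intro k h0 hn
    have hk : k ∈ lamN n := mem_lamN.mpr ⟨h0, hn⟩
    simp only [ovr, dif_pos hk, hwξ]
  have hham := ham_birk_diff Φ hΦ hTI hUAC n (ovr (lamN n) wξ η)
  have hbdiff := birk_diff_le Φ hΦ hTI hUAC n hagree
  rw [abs_le] at hham hbdiff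
  have hnum_u : Real.exp (-(ham Φ (lamN n) (ovr (lamN n) wξ η)))
      ≤ Real.exp (birk (phiInter Φ) n ω + (errH Φ n + 2 * errL Φ n)) := by
    apply Real.exp_le_exp.mpr; linarith [hham.2, hbdiff.2]
  have hnum_l : Real.exp (birk (phiInter Φ) n ω - (errH Φ n + 2 * errL Φ n))
      ≤ Real.exp (-(ham Φ (lamN n) (ovr (lamN n) wξ η))) := by
    apply Real.exp_le_exp.mpr; linarith [hham.1, hbdiff.1]
  have hterm_u : ∀ ζ : {k // k ∈ lamN n} → E,
      Real.exp (-(ham Φ (lamN n) (ovr (lamN n) ζ η)))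
        ≤ Real.exp (errH Φ n)
          * sSup ((fun ω => Real.exp (birk (phiInter Φ) n ω)) '' cylW (wOf ζ)) := by
    intro ζ
    have h1 := ham_birk_diff Φ hΦ hTI hUAC n (ovr (lamN n) ζ η)
    rw [abs_le] at h1
    calc Real.exp (-(ham Φ (lamN n) (ovr (lamN n) ζ η)))
        ≤ Real.exp (errH Φ n + birk (phiInter Φ) n (ovr (lamN n) ζ η)) := by
          apply Real.exp_le_exp.mpr; linarith [h1.2]
      _ = Real.exp (errH Φ n) * Real.exp (birk (phiInter Φ) n (ovr (lamN n) ζ η)) :=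
          Real.exp_add _ _
      _ ≤ _ := mul_le_mul_of_nonneg_left
          (le_csSup (bddAbove_exp_birk Φ hΦ hTI hUAC n (wOf ζ))
            ⟨ovr (lamN n) ζ η, ovr_mem_cylW ζ η, rfl⟩) (Real.exp_pos _).le
  have hterm_l : ∀ ζ : {k // k ∈ lamN n} → E,
      Real.exp (-(errH Φ n + 2 * errL Φ n))
        * sSup ((fun ω => Real.exp (birk (phiInter Φ) n ω)) '' cylW (wOf ζ))
      ≤ Real.exp (-(ham Φ (lamN n) (ovr (lamN n) ζ η))) := by
    intro ζ
    have h1 := ham_birk_diff Φ hΦ hTI hUAC n (ovr (lamN n) ζ η)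
    rw [abs_le] at h1
    have hsup : sSup ((fun ω => Real.exp (birk (phiInter Φ) n ω)) '' cylW (wOf ζ))
        ≤ Real.exp (2 * errL Φ n)
          * Real.exp (birk (phiInter Φ) n (ovr (lamN n) ζ η)) := by
      apply csSup_le ((cylW_nonempty _).image _)
      rintro x ⟨ω', hω', rfl⟩
      have hag := agree_of_mem_cylW hω' (ovr_mem_cylW ζ η)
      have h2 := birk_diff_le Φ hΦ hTI hUAC n hag
      rw [abs_le] at h2
      calc Real.exp (birk (phiInter Φ) n ω')
          ≤ Real.exp (2 * errL Φ n + birk (phiInter Φ) n (ovr (lamN n) ζ η)) := by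
            apply Real.exp_le_exp.mpr; linarith [h2.2]
        _ = _ := Real.exp_add _ _
    calc Real.exp (-(errH Φ n + 2 * errL Φ n))
          * sSup ((fun ω => Real.exp (birk (phiInter Φ) n ω)) '' cylW (wOf ζ))
        ≤ Real.exp (-(errH Φ n + 2 * errL Φ n))
          * (Real.exp (2 * errL Φ n)
            * Real.exp (birk (phiInter Φ) n (ovr (lamN n) ζ η))) :=
          mul_le_mul_of_nonneg_left hsup (Real.exp_pos _).le
      _ = Real.exp (birk (phiInter Φ) n (ovr (lamN n) ζ η) - errH Φ n) := by
          rw [← Real.exp_add, ← Real.exp_add]; congr 1; ring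
      _ ≤ _ := by apply Real.exp_le_exp.mpr; linarith [h1.1]
  set Z := ∑ ζ : {k // k ∈ lamN n} → E,
    Real.exp (-(ham Φ (lamN n) (ovr (lamN n) ζ η))) with hZdef
  have hZ_u : Z ≤ Real.exp (errH Φ n) * Real.exp a := by
    calc Z ≤ ∑ ζ : {k // k ∈ lamN n} → E, Real.exp (errH Φ n)
          * sSup ((fun ω => Real.exp (birk (phiInter Φ) n ω)) '' cylW (wOf ζ)) :=
          Finset.sum_le_sum (fun ζ _ => hterm_u ζ)
      _ = Real.exp (errH Φ n) * Qn Φ n := by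
          rw [← Finset.mul_sum, sum_sSup_eq_Qn]
      _ = _ := by rw [hQ]
  have hZ_l : Real.exp (-(errH Φ n + 2 * errL Φ n)) * Real.exp a ≤ Z := by
    calc Real.exp (-(errH Φ n + 2 * errL Φ n)) * Real.exp a
        = Real.exp (-(errH Φ n + 2 * errL Φ n)) * Qn Φ n := by rw [hQ]
      _ = ∑ ζ : {k // k ∈ lamN n} → E, Real.exp (-(errH Φ n + 2 * errL Φ n))
          * sSup ((fun ω => Real.exp (birk (phiInter Φ) n ω)) '' cylW (wOf ζ)) := by
          rw [← Finset.mul_sum, sum_sSup_eq_Qn]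
      _ ≤ Z := Finset.sum_le_sum (fun ζ _ => hterm_l ζ)
  have hZpos : 0 < Z := Finset.sum_pos (fun ζ _ => Real.exp_pos _) Finset.univ_nonempty
  have hspec : specOfInter Φ (lamN n) (ovr (lamN n) wξ η)
      = Real.exp (-(ham Φ (lamN n) (ovr (lamN n) wξ η))) / Z := by
    rw [specOfInter, hZdef]
    congr 1
    refine Finset.sum_congr rfl (fun ζ _ => ?_)
    rw [ovr_ovr]
  constructor
  · have h1 : Real.exp (-(2 * errH Φ n + 2 * errL Φ n + (a - n * P)))
        * Real.exp (birk (phiInter Φ) n ω - n * P)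
        = Real.exp (birk (phiInter Φ) n ω - (errH Φ n + 2 * errL Φ n))
          / (Real.exp (errH Φ n) * Real.exp a) := by
      rw [← Real.exp_add, ← Real.exp_add, ← Real.exp_sub]
      congr 1; ring
    rw [hspec, h1]
    exact div_le_div₀ (Real.exp_pos _).le hnum_l hZpos hZ_u
  · have h2 : Real.exp (birk (phiInter Φ) n ω + (errH Φ n + 2 * errL Φ n))
        / (Real.exp (-(errH Φ n + 2 * errL Φ n)) * Real.exp a)
        ≤ Real.exp (2 * errH Φ n + 4 * errL Φ n)
          * Real.exp (birk (phiInter Φ) n ω - n * P) := by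
      rw [← Real.exp_add, ← Real.exp_sub, ← Real.exp_add]
      apply Real.exp_le_exp.mpr
      linarith [haP]
    rw [hspec]
    exact le_trans (div_le_div₀ (Real.exp_pos _).le hnum_u (by positivity) hZ_l) h2

end Aux7
section Aux8

variable {E : Type*} (Φ : Finset ℤ → Conf E → ℝ)

lemma measurableSet_cylPt [MeasurableSpace E] [MeasurableSingletonClass E]
    (ω : Conf E) (n : ℕ) : MeasurableSet (cylPt ω n) := by
  have h : cylPt ω n = ⋂ j : Fin n,
      (fun ω' : Conf E => ω' ((j : ℕ) : ℤ)) ⁻¹' {ω ((j : ℕ) : ℤ)} := by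
    ext ω'
    simp only [cylPt, Set.mem_setOf_eq, Set.mem_iInter, Set.mem_preimage,
      Set.mem_singleton_iff]
    constructor
    · intro h j; exact h (j : ℕ) j.2
    · intro h j hj; exact h ⟨j, hj⟩
  rw [h]
  exact MeasurableSet.iInter fun j =>
    (measurable_pi_apply _) (MeasurableSet.singleton _)

lemma continuous_indicator_cylPt [TopologicalSpace E] [DiscreteTopology E] [Fintype E]
    (ω : Conf E) (n : ℕ) :
    Continuous ((cylPt ω n).indicator (fun _ => (1 : ℝ))) := by
  classical
  set g : Conf E → (Fin n → E) := fun ω' j => ω' ((j : ℕ) : ℤ) with hg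
  set S : Set (Fin n → E) := {v | ∀ j, v j = ω ((j : ℕ) : ℤ)} with hS
  have hpre : cylPt ω n = g ⁻¹' S := by
    ext ω'
    simp only [cylPt, Set.mem_setOf_eq, Set.mem_preimage, hg, hS]
    constructor
    · intro h j; exact h (j : ℕ) j.2
    · intro h j hj; exact h ⟨j, hj⟩
  have hcomp : (cylPt ω n).indicator (fun _ => (1 : ℝ))
      = (S.indicator (fun _ => (1 : ℝ))) ∘ g := by
    funext x
    by_cases h : x ∈ cylPt ω n
    · rw [Set.indicator_of_mem h, Function.comp_apply, Set.indicator_of_mem]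
      rw [hpre] at h; exact h
    · rw [Set.indicator_of_notMem h, Function.comp_apply, Set.indicator_of_notMem]
      rw [hpre] at h; exact h
  rw [hcomp]
  exact (continuous_of_discreteTopology).comp
    (continuous_pi fun j => continuous_apply _)

variable [Fintype E] [TopologicalSpace E] [Nonempty E]

lemma Zpart_pos (hΦ : IsInteraction Φ) (hTI : InterTI Φ) (hUAC : UAC Φ)
    (Λ : Finset ℤ) (η : Conf E) :
    0 < ∑ ζ : {k // k ∈ Λ} → E, Real.exp (-(ham Φ Λ (ovr Λ ζ η))) :=
  Finset.sum_pos (fun ζ _ => Real.exp_pos _) Finset.univ_nonempty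

lemma sum_spec_eq_one (hΦ : IsInteraction Φ) (hTI : InterTI Φ) (hUAC : UAC Φ)
    (Λ : Finset ℤ) (η : Conf E) :
    ∑ ξ : {k // k ∈ Λ} → E, specOfInter Φ Λ (ovr Λ ξ η) = 1 := by
  have hrw : ∀ ξ : {k // k ∈ Λ} → E, specOfInter Φ Λ (ovr Λ ξ η)
      = Real.exp (-(ham Φ Λ (ovr Λ ξ η)))
        / ∑ ζ : {k // k ∈ Λ} → E, Real.exp (-(ham Φ Λ (ovr Λ ζ η))) := by
    intro ξ
    rw [specOfInter]
    congr 1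
    refine Finset.sum_congr rfl (fun ζ _ => ?_)
    rw [ovr_ovr]
  rw [Finset.sum_congr rfl (fun ξ _ => hrw ξ), ← Finset.sum_div]
  exact div_self (Zpart_pos Φ hΦ hTI hUAC Λ η).ne'

lemma ovr_mem_cylPt_iff (n : ℕ) (ω η : Conf E) (ξ : {k // k ∈ lamN n} → E) :
    ovr (lamN n) ξ η ∈ cylPt ω n ↔ ξ = (fun k => ω k.1) := by
  constructor
  · intro h
    funext k
    have hk := mem_lamN.mp k.2
    have h1 : ovr (lamN n) ξ η k.1 = ξ k := by
      simp only [ovr, dif_pos k.2]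
    obtain ⟨m, hm⟩ : ∃ m : ℕ, (m : ℤ) = k.1 := ⟨k.1.toNat, Int.toNat_of_nonneg hk.1⟩
    have hmn : m < n := by omega
    have h2 := h m hmn
    rw [hm] at h2
    rw [← h1, h2]
  · rintro rfl
    intro j hj
    have hjm : ((j : ℕ) : ℤ) ∈ lamN n := mem_lamN.mpr ⟨Int.natCast_nonneg _, by exact_mod_cast hj⟩
    simp only [ovr, dif_pos hjm]

lemma sum_spec_indicator (hΦ : IsInteraction Φ) (hTI : InterTI Φ) (hUAC : UAC Φ)
    (n : ℕ) (ω η : Conf E) :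
    ∑ ξ : {k // k ∈ lamN n} → E, specOfInter Φ (lamN n) (ovr (lamN n) ξ η)
      * (cylPt ω n).indicator (fun _ => (1 : ℝ)) (ovr (lamN n) ξ η)
    = specOfInter Φ (lamN n) (ovr (lamN n) (fun k => ω k.1) η) := by
  classical
  have h1 : ∀ ξ : {k // k ∈ lamN n} → E,
      specOfInter Φ (lamN n) (ovr (lamN n) ξ η)
        * (cylPt ω n).indicator (fun _ => (1 : ℝ)) (ovr (lamN n) ξ η)
      = if ξ = (fun k => ω k.1) then specOfInter Φ (lamN n) (ovr (lamN n) ξ η) else 0 := by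
    intro ξ
    by_cases h : ξ = (fun k => ω k.1)
    · rw [if_pos h, Set.indicator_of_mem ((ovr_mem_cylPt_iff n ω η ξ).mpr h), mul_one]
    · rw [if_neg h, Set.indicator_of_notMem
        (fun hh => h ((ovr_mem_cylPt_iff n ω η ξ).mp hh)), mul_zero]
  rw [Finset.sum_congr rfl (fun ξ _ => h1 ξ), Finset.sum_ite_eq' Finset.univ]
  rw [if_pos (Finset.mem_univ _)]

end Aux8
/-- For a translation-invariant UAC interaction `Φ` with
`φ = -∑_{V ∋ 0, V ⊆ ℤ_{≥0}} Φ_V`, there is a subexponential sequence `C_n` such that every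
shift-invariant Gibbs measure `μ` for `Φ` satisfies the weak Bowen-Gibbs bounds with
pressure `P(φ)`. -/
theorem weakBowenGibbs_of_UAC_interaction [Fintype E] [Nonempty E] [TopologicalSpace E] [DiscreteTopology E]
    [MeasurableSpace E] [MeasurableSingletonClass E]
    (Φ : Finset ℤ → Conf E → ℝ) (hΦ : IsInteraction Φ) (hTI : InterTI Φ) (hUAC : UAC Φ) :
    ∃ C : ℕ → ℝ, (∀ n, 0 < C n) ∧
      Tendsto (fun n : ℕ => Real.log (C n) / n) atTop (𝓝 0) ∧
      ∀ μ : Measure (Conf E), IsDLRGibbs (specOfInter Φ) μ → ShiftInv μ →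
        ∀ (n : ℕ) (ω : Conf E),
          (C n)⁻¹ ≤ (μ (cylPt ω n)).toReal /
              Real.exp (birk (phiInter Φ) n ω - n * press (phiInter Φ)) ∧
          (μ (cylPt ω n)).toReal /
              Real.exp (birk (phiInter Φ) n ω - n * press (phiInter Φ)) ≤ C n := by
  classical
  obtain ⟨hPle, hPtend⟩ := press_facts Φ hΦ hTI hUAC
  set P : ℝ := press (phiInter Φ) with hPdef
  set C : ℕ → ℝ := fun n =>
    Real.exp (2 * errH Φ n + 4 * errL Φ n + (Real.log (Qn Φ n) - n * P)) with hCdef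
  refine ⟨C, fun n => Real.exp_pos _, ?_, ?_⟩
  · have h1 := errH_div_tendsto Φ hTI hUAC
    have h2 := errL_div_tendsto Φ hTI hUAC
    have hsum := ((h1.const_mul (2 : ℝ)).add (h2.const_mul (4 : ℝ))).add hPtend
    simp only [mul_zero, add_zero, zero_add] at hsum
    refine hsum.congr (fun n => ?_)
    show 2 * (errH Φ n / n) + 4 * (errL Φ n / n) + (Real.log (Qn Φ n) - n * P) / n
      = Real.log (C n) / n
    rw [hCdef]
    show _ = Real.log (Real.exp (2 * errH Φ n + 4 * errL Φ n
      + (Real.log (Qn Φ n) - n * P))) / n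
    rw [Real.log_exp, add_div, add_div]
    ring
  · intro μ hGibbs _hShift n ω
    obtain ⟨hprob, hDLR⟩ := hGibbs
    have hfmeas := measurableSet_cylPt ω n
    set f : Conf E → ℝ := (cylPt ω n).indicator (fun _ => (1 : ℝ)) with hfdef
    have hfcont : Continuous f := continuous_indicator_cylPt ω n
    have hfint : Integrable f μ := (integrable_const (1 : ℝ)).indicator hfmeas
    have hfval : ∫ x, f x ∂μ = (μ (cylPt ω n)).toReal := by
      rw [hfdef, integral_indicator_const (1 : ℝ) hfmeas, smul_eq_mul, mul_one]
      rfl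
    set eb : ℝ := Real.exp (birk (phiInter Φ) n ω - n * P) with hebdef
    have hebpos : 0 < eb := Real.exp_pos _
    set U : ℝ := Real.exp (2 * errH Φ n + 4 * errL Φ n) * eb with hUdef
    set L : ℝ := Real.exp (-(2 * errH Φ n + 2 * errL Φ n
      + (Real.log (Qn Φ n) - n * P))) * eb with hLdef
    have hb := fun η => spec_bound_main Φ hΦ hTI hUAC n ω η
    have hup : (μ (cylPt ω n)).toReal ≤ U := by
      have hDLRu := hDLR (lamN n) (fun x => U - f x) (continuous_const.sub hfcont)
      have hpt : ∀ η : Conf E, ∑ ξ : {k // k ∈ lamN n} → E,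
          specOfInter Φ (lamN n) (ovr (lamN n) ξ η)
            * ((fun x => U - f x) (ovr (lamN n) ξ η))
          = U - specOfInter Φ (lamN n) (ovr (lamN n) (fun k => ω k.1) η) := by
        intro η
        rw [Finset.sum_congr rfl (fun ξ _ => mul_sub
          (specOfInter Φ (lamN n) (ovr (lamN n) ξ η)) U (f (ovr (lamN n) ξ η))),
          Finset.sum_sub_distrib, hfdef, sum_spec_indicator Φ hΦ hTI hUAC n ω η,
          ← Finset.sum_mul, sum_spec_eq_one Φ hΦ hTI hUAC (lamN n) η, one_mul]
      have h0 : 0 ≤ ∫ η, (∑ ξ : {k // k ∈ lamN n} → E,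
          specOfInter Φ (lamN n) (ovr (lamN n) ξ η)
            * ((fun x => U - f x) (ovr (lamN n) ξ η))) ∂μ := by
        refine integral_nonneg (fun η => ?_)
        rw [hpt η]
        exact sub_nonneg.mpr (hb η).2
      rw [hDLRu] at h0
      have hintval : ∫ η, (fun x => U - f x) η ∂μ = U - (μ (cylPt ω n)).toReal := by
        show ∫ η, (U - f η) ∂μ = _
        rw [integral_sub (integrable_const U) hfint, integral_const, hfval]
        simp
      rw [hintval] at h0
      linarith
    have hlo : L ≤ (μ (cylPt ω n)).toReal := by
      have hDLRl := hDLR (lamN n) (fun x => f x - L) (hfcont.sub continuous_const)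
      have hpt : ∀ η : Conf E, ∑ ξ : {k // k ∈ lamN n} → E,
          specOfInter Φ (lamN n) (ovr (lamN n) ξ η)
            * ((fun x => f x - L) (ovr (lamN n) ξ η))
          = specOfInter Φ (lamN n) (ovr (lamN n) (fun k => ω k.1) η) - L := by
        intro η
        rw [Finset.sum_congr rfl (fun ξ _ => mul_sub
          (specOfInter Φ (lamN n) (ovr (lamN n) ξ η)) (f (ovr (lamN n) ξ η)) L),
          Finset.sum_sub_distrib, hfdef, sum_spec_indicator Φ hΦ hTI hUAC n ω η,
          ← Finset.sum_mul, sum_spec_eq_one Φ hΦ hTI hUAC (lamN n) η, one_mul]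
      have h0 : 0 ≤ ∫ η, (∑ ξ : {k // k ∈ lamN n} → E,
          specOfInter Φ (lamN n) (ovr (lamN n) ξ η)
            * ((fun x => f x - L) (ovr (lamN n) ξ η))) ∂μ := by
        refine integral_nonneg (fun η => ?_)
        rw [hpt η]
        exact sub_nonneg.mpr (hb η).1
      rw [hDLRl] at h0
      have hintval : ∫ η, (fun x => f x - L) η ∂μ = (μ (cylPt ω n)).toReal - L := by
        show ∫ η, (f η - L) ∂μ = _
        rw [integral_sub hfint (integrable_const L), integral_const, hfval]
        simp
      rw [hintval] at h0
      linarith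
    constructor
    · rw [le_div_iff₀ hebpos]
      have hCinv : (C n)⁻¹ = Real.exp (-(2 * errH Φ n + 4 * errL Φ n
          + (Real.log (Qn Φ n) - n * P))) := by
        rw [hCdef, Real.exp_neg]
      calc (C n)⁻¹ * eb
          ≤ Real.exp (-(2 * errH Φ n + 2 * errL Φ n
            + (Real.log (Qn Φ n) - n * P))) * eb := by
            refine mul_le_mul_of_nonneg_right ?_ hebpos.le
            rw [hCinv]
            apply Real.exp_le_exp.mpr
            have := errL_nonneg Φ n
            linarith
        _ = L := by rw [hLdef]
        _ ≤ _ := hlo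
    · rw [div_le_iff₀ hebpos]
      calc (μ (cylPt ω n)).toReal ≤ U := hup
        _ ≤ C n * eb := by
            rw [hUdef, hCdef]
            refine mul_le_mul_of_nonneg_right ?_ hebpos.le
            apply Real.exp_le_exp.mpr
            have := hPle n
            linarith

end GP
end

section
/- Suppose φ : Ω → ℝ is continuous and has the extensibility property. Then for any pair ξ, η ∈ Ω such that the set {k ∈ ℤ : ξ_k ≠ η_k} is finite, the sequence ρ_n(ξ, η) = Σ_{i=−n}^{n} [φ(S^i ξ) − φ(S^i η)], n ≥ 0, converges as n → ∞. -/
open Filter Topology MeasureTheory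

namespace GP

variable {E : Type*}

/-- Uniform continuity of a continuous function on the compact space `Conf E`,
expressed via cylinders. -/
lemma aux_ucont [Fintype E] [TopologicalSpace E] [DiscreteTopology E]
    (φ : Conf E → ℝ) (hφc : Continuous φ) {ε : ℝ} (hε : 0 < ε) :
    ∃ N : ℕ, ∀ x y : Conf E, (∀ m : ℤ, m.natAbs ≤ N → x m = y m) → |φ x - φ y| < ε := by
  by_contra hcon
  push_neg at hcon
  set C : ℕ → Set (Conf E × Conf E) := fun N =>
    {p | ∀ m : ℤ, m.natAbs ≤ N → p.1 m = p.2 m} ∩ {p | ε ≤ |φ p.1 - φ p.2|} with hC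
  have hne : ∀ N, (C N).Nonempty := by
    intro N
    obtain ⟨x, y, h1, h2⟩ := hcon N
    exact ⟨(x, y), h1, h2⟩
  have hclosed : ∀ N, IsClosed (C N) := by
    intro N
    apply IsClosed.inter
    · have : {p : Conf E × Conf E | ∀ m : ℤ, m.natAbs ≤ N → p.1 m = p.2 m}
          = ⋂ m ∈ {m : ℤ | m.natAbs ≤ N}, {p : Conf E × Conf E | p.1 m = p.2 m} := by
        ext p; simp [Set.mem_iInter]
      rw [this]
      refine isClosed_biInter fun m _ => ?_
      exact isClosed_eq ((continuous_apply m).comp continuous_fst)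
        ((continuous_apply m).comp continuous_snd)
    · exact isClosed_le continuous_const
        (continuous_abs.comp ((hφc.comp continuous_fst).sub (hφc.comp continuous_snd)))
  have hanti : ∀ N, C (N + 1) ⊆ C N := by
    intro N p hp
    exact ⟨fun m hm => hp.1 m (by omega), hp.2⟩
  have hcomp : IsCompact (C 0) := (hclosed 0).isCompact
  obtain ⟨p, hp⟩ := IsCompact.nonempty_iInter_of_sequence_nonempty_isCompact_isClosed
    C hanti hne hcomp hclosed
  have heq : p.1 = p.2 := by
    funext m
    exact (Set.mem_iInter.mp hp m.natAbs).1 m le_rfl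
  have h2 : ε ≤ 0 := by
    have := (Set.mem_iInter.mp hp 0).2
    simpa [heq] using this
  linarith

/-- Terms `φ(S^j ξ) - φ(S^j η)` tend to `0` as `|j| → ∞` when `ξ, η`
agree outside a finite set. -/
lemma aux_tail_small [Fintype E] [TopologicalSpace E] [DiscreteTopology E]
    (φ : Conf E → ℝ) (hφc : Continuous φ) (ξ η : Conf E) (D : Finset ℤ)
    (hD : ∀ k, k ∉ D → ξ k = η k) {ε : ℝ} (hε : 0 < ε) :
    ∃ M : ℕ, ∀ j : ℤ, M ≤ j.natAbs → |φ (shiftZ j ξ) - φ (shiftZ j η)| < ε := by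
  obtain ⟨N, hN⟩ := aux_ucont φ hφc hε
  set R : ℕ := D.sup fun d => d.natAbs with hR
  refine ⟨N + R + 1, fun j hj => ?_⟩
  refine hN _ _ fun m hm => ?_
  show ξ (m + j) = η (m + j)
  refine hD _ fun hmem => ?_
  have : (m + j).natAbs ≤ R := Finset.le_sup (f := fun d : ℤ => d.natAbs) hmem
  omega

/-- Additivity of `rhoN` in the middle configuration. -/
lemma aux_rhoN_add (φ : Conf E → ℝ) (ξ ζ η : Conf E) (n : ℕ) :
    rhoN φ ξ η n = rhoN φ ξ ζ n + rhoN φ ζ η n := by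
  unfold rhoN
  rw [← Finset.sum_add_distrib]
  refine Finset.sum_congr rfl fun i _ => ?_
  ring

lemma aux_rhoN_neg (φ : Conf E → ℝ) (ξ η : Conf E) (n : ℕ) :
    rhoN φ ξ η n = - rhoN φ η ξ n := by
  unfold rhoN
  rw [← Finset.sum_neg_distrib]
  refine Finset.sum_congr rfl fun i _ => ?_
  ring

/-- Convergence of `rhoN` for a single-site modification. -/
lemma aux_single_site [Fintype E] [TopologicalSpace E] [DiscreteTopology E]
    (φ : Conf E → ℝ) (hφc : Continuous φ) (hφe : Extensible φ)
    (η : Conf E) (k : ℤ) (b : E) :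
    ∃ L : ℝ, Tendsto (rhoN φ (Function.update η k b) η) atTop (𝓝 L) := by
  classical
  set ω : Conf E := shiftZ k η with hω
  obtain ⟨r, hr⟩ := hφe (η k) b
  have hωa : upd0 ω (η k) = ω := by
    have h0 : ω 0 = η k := by simp [hω, shiftZ]
    rw [upd0, ← h0]
    exact Function.update_eq_self 0 ω
  set g : ℤ → ℝ := fun j => φ (shiftZ j (upd0 ω b)) - φ (shiftZ j ω) with hg
  have hT : Tendsto (fun n : ℕ => ∑ j ∈ Finset.Icc (-(n : ℤ)) (n : ℤ), g j)
      atTop (𝓝 (r ω)) := by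
    have := hr.tendsto_at ω
    simpa [rhoN, hωa, hg] using this
  have hconf1 : ∀ i : ℤ, shiftZ i η = shiftZ (i - k) ω := by
    intro i; funext m
    show η (m + i) = η (m + (i - k) + k)
    congr 1; ring
  have hconf2 : ∀ i : ℤ, shiftZ i (Function.update η k b) = shiftZ (i - k) (upd0 ω b) := by
    intro i; funext m
    show Function.update η k b (m + i) = Function.update ω 0 b (m + (i - k))
    rw [Function.update_apply, Function.update_apply]
    by_cases h : m + i = k
    · rw [if_pos h, if_pos (by omega)]
    · rw [if_neg h, if_neg (by omega)]
      show η (m + i) = η (m + (i - k) + k)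
      congr 1; ring
  have hS : ∀ n : ℕ, rhoN φ (Function.update η k b) η n
      = ∑ j ∈ Finset.Icc (-(n : ℤ) - k) ((n : ℤ) - k), g j := by
    intro n
    have h1 : rhoN φ (Function.update η k b) η n
        = ∑ i ∈ Finset.Icc (-(n : ℤ)) (n : ℤ), g (i - k) := by
      unfold rhoN
      refine Finset.sum_congr rfl fun i _ => ?_
      rw [hconf1 i, hconf2 i]
    rw [h1]
    have h2 : Finset.Icc (-(n : ℤ) - k) ((n : ℤ) - k)
        = (Finset.Icc (-(n : ℤ)) (n : ℤ)).map (addRightEmbedding (-k)) := by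
      rw [Finset.map_add_right_Icc]
      congr 1
    rw [h2, Finset.sum_map]
    refine Finset.sum_congr rfl fun i _ => ?_
    simp [addRightEmbedding, sub_eq_add_neg]
  set K : ℕ := k.natAbs with hK
  have hdiff : Tendsto (fun n : ℕ =>
      (∑ j ∈ Finset.Icc (-(n : ℤ) - k) ((n : ℤ) - k), g j)
        - ∑ j ∈ Finset.Icc (-(n : ℤ)) (n : ℤ), g j) atTop (𝓝 0) := by
    rw [Metric.tendsto_atTop]
    intro ε hε
    have hden : (0 : ℝ) < 8 * (K : ℝ) + 5 := by positivity
    have hε' : 0 < ε / (8 * (K : ℝ) + 5) := div_pos hε hden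
    have hupd : ∀ m : ℤ, m ∉ ({0} : Finset ℤ) → upd0 ω b m = ω m := by
      intro m hm
      exact Function.update_of_ne (by simpa using hm) _ _
    obtain ⟨M, hM⟩ := aux_tail_small φ hφc (upd0 ω b) ω {0} hupd hε'
    refine ⟨K + M + 1, fun n hn => ?_⟩
    set A : Finset ℤ := Finset.Icc (-(n : ℤ) - k) ((n : ℤ) - k) with hA
    set B : Finset ℤ := Finset.Icc (-(n : ℤ)) (n : ℤ) with hB
    set U : Finset ℤ := Finset.Icc (-(n : ℤ) - K) (-(n : ℤ) + K)
        ∪ Finset.Icc ((n : ℤ) - K) ((n : ℤ) + K) with hU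
    have hgU : ∀ j ∈ U, |g j| ≤ ε / (8 * (K : ℝ) + 5) := by
      intro j hj
      refine le_of_lt (hM j ?_)
      simp only [hU, Finset.mem_union, Finset.mem_Icc] at hj
      omega
    have hUsum : ∑ j ∈ U, |g j| ≤ (U.card : ℝ) * (ε / (8 * (K : ℝ) + 5)) := by
      have := Finset.sum_le_card_nsmul U (fun j => |g j|) _ hgU
      simpa [nsmul_eq_mul] using this
    have hUcard : U.card ≤ 4 * K + 2 := by
      refine le_trans (Finset.card_union_le _ _) ?_
      rw [Int.card_Icc, Int.card_Icc]
      omega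
    have hsub1 : A \ B ⊆ U := by
      intro j hj
      simp only [hA, hB, hU, Finset.mem_sdiff, Finset.mem_Icc, Finset.mem_union] at hj ⊢
      omega
    have hsub2 : B \ A ⊆ U := by
      intro j hj
      simp only [hA, hB, hU, Finset.mem_sdiff, Finset.mem_Icc, Finset.mem_union] at hj ⊢
      omega
    have hsplit : (∑ j ∈ A, g j) - ∑ j ∈ B, g j
        = (∑ j ∈ A \ B, g j) - ∑ j ∈ B \ A, g j := by
      rw [← Finset.sum_inter_add_sum_sdiff A B g, ← Finset.sum_inter_add_sum_sdiff B A g,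
        Finset.inter_comm]
      ring
    have habs : |(∑ j ∈ A, g j) - ∑ j ∈ B, g j|
        ≤ (∑ j ∈ A \ B, |g j|) + ∑ j ∈ B \ A, |g j| := by
      rw [hsplit]
      refine le_trans (abs_sub _ _) ?_
      gcongr <;> exact Finset.abs_sum_le_sum_abs _ _
    have hle1 : ∑ j ∈ A \ B, |g j| ≤ ∑ j ∈ U, |g j| :=
      Finset.sum_le_sum_of_subset_of_nonneg hsub1 (fun j _ _ => abs_nonneg _)
    have hle2 : ∑ j ∈ B \ A, |g j| ≤ ∑ j ∈ U, |g j| :=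
      Finset.sum_le_sum_of_subset_of_nonneg hsub2 (fun j _ _ => abs_nonneg _)
    rw [Real.dist_eq, sub_zero]
    have hcardR : (U.card : ℝ) ≤ 4 * (K : ℝ) + 2 := by
      exact_mod_cast le_trans (Nat.cast_le.mpr hUcard) (by norm_num)
    have hfinal : (U.card : ℝ) * (ε / (8 * (K : ℝ) + 5))
        ≤ (4 * (K : ℝ) + 2) * (ε / (8 * (K : ℝ) + 5)) := by
      exact mul_le_mul_of_nonneg_right hcardR hε'.le
    have : |(∑ j ∈ A, g j) - ∑ j ∈ B, g j|
        ≤ 2 * ((4 * (K : ℝ) + 2) * (ε / (8 * (K : ℝ) + 5))) := by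
      nlinarith [hUsum, hle1, hle2, habs, hfinal]
    refine lt_of_le_of_lt this ?_
    have hεeq : (8 * (K : ℝ) + 5) * (ε / (8 * (K : ℝ) + 5)) = ε :=
      mul_div_cancel₀ ε (ne_of_gt hden)
    nlinarith [hε']
  have hfun : rhoN φ (Function.update η k b) η
      = fun n : ℕ => ((∑ j ∈ Finset.Icc (-(n : ℤ) - k) ((n : ℤ) - k), g j)
          - ∑ j ∈ Finset.Icc (-(n : ℤ)) (n : ℤ), g j)
        + ∑ j ∈ Finset.Icc (-(n : ℤ)) (n : ℤ), g j := by
    funext n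
    rw [hS n]; ring
  refine ⟨r ω, ?_⟩
  rw [hfun]
  simpa using hdiff.add hT

/-- Main induction on the set of differing coordinates. -/
lemma aux_main [Fintype E] [TopologicalSpace E] [DiscreteTopology E]
    (φ : Conf E → ℝ) (hφc : Continuous φ) (hφe : Extensible φ) :
    ∀ D : Finset ℤ, ∀ ξ η : Conf E, (∀ k, k ∉ D → ξ k = η k) →
      ∃ L : ℝ, Tendsto (rhoN φ ξ η) atTop (𝓝 L) := by
  classical
  intro D
  induction D using Finset.induction_on with
  | empty =>
    intro ξ η hagree
    have hξη : ξ = η := funext fun m => hagree m (by simp)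
    refine ⟨0, ?_⟩
    have : rhoN φ ξ η = fun _ => (0 : ℝ) := by
      funext n; rw [hξη]; simp [rhoN]
    rw [this]
    exact tendsto_const_nhds
  | @insert a s ha ih =>
    intro ξ η hagree
    set ζ : Conf E := Function.update ξ a (η a) with hζ
    have hζη : ∀ m, m ∉ s → ζ m = η m := by
      intro m hm
      by_cases hma : m = a
      · subst hma; simp [hζ]
      · rw [hζ, Function.update_of_ne hma]
        exact hagree m (by simp [hma, hm])
    obtain ⟨L₁, h₁⟩ := ih ζ η hζη
    obtain ⟨L₂, h₂⟩ := aux_single_site φ hφc hφe ξ a (η a)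
    refine ⟨-L₂ + L₁, ?_⟩
    have hfun : rhoN φ ξ η = fun n => (- rhoN φ ζ ξ n) + rhoN φ ζ η n := by
      funext n
      rw [aux_rhoN_add φ ξ ζ η n, aux_rhoN_neg φ ξ ζ n]
    rw [hfun]
    exact (h₂.neg).add h₁

/-- If `φ` is continuous with the extensibility property and `ξ, η`
differ in at most finitely many coordinates, then
`ρ_n(ξ,η) = ∑_{i=-n}^{n} (φ(S^i ξ) - φ(S^i η))` converges as `n → ∞`. -/
theorem rhoN_converges_of_extensible [Fintype E] [Nonempty E] [TopologicalSpace E] [DiscreteTopology E]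
    [MeasurableSpace E] [MeasurableSingletonClass E]
    (φ : Conf E → ℝ) (hφc : Continuous φ) (hφe : Extensible φ)
    (ξ η : Conf E) (h : FinDiff ξ η) :
    ∃ L : ℝ, Tendsto (rhoN φ ξ η) atTop (𝓝 L) := by
  refine aux_main φ hφc hφe h.toFinset ξ η fun k hk => ?_
  have : k ∉ {m : ℤ | ξ m ≠ η m} := fun hmem => hk (h.mem_toFinset.mpr hmem)
  simpa [not_not] using this

end GP
end
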